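/- arXiv:1312.2255 — 3 statements merged into one kernel-verified Lean document; each statement's English description precedes it below -/
import Mathlib

section
/- Let X and X' be n × N matrices over k satisfying X J X^T = 0 and X' J X'^T = 0 (i.e., their row spaces are isotropic for the symmetric bilinear form). Then rank X = rank X' if and only if there exist an invertible n × n matrix P over k and an N × N matrix S over k with S J S^T = J such that X' = P X S. That is, two closed points of the orthogonal Littlewood variety lie in the same GL_n(k) × O_N(k) orbit if and only if they have the same rank. (Proposition 4.2(d), orbit classification.) -/
set_option autoImplicit false
set_option maxHeartbeats 1000000

open Matrix Module Submodule

lemma exists_orthonormal_basis {K V : Type*} [Field K] [IsAlgClosed K]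
    [AddCommGroup V] [Module K V] [FiniteDimensional K V]
    (h2 : (2 : K) ≠ 0) (B : LinearMap.BilinForm K V) (hsym : B.IsSymm)
    (hnd : ∀ v, (∀ w, B v w = 0) → v = 0) :
    ∃ b : Basis (Fin (finrank K V)) K V,
      ∀ i j, B (b i) (b j) = if i = j then 1 else 0 := by
  haveI : Invertible (2 : K) := invertibleOfNonzero h2
  obtain ⟨v, hv⟩ := LinearMap.BilinForm.exists_orthogonal_basis (LinearMap.BilinForm.isSymm_iff.1 hsym)
  have hdne : ∀ i, B (v i) (v i) ≠ 0 := by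
    intro i hzero
    refine v.ne_zero i (hnd _ fun w => ?_)
    have hw := v.sum_repr w
    calc B (v i) w = B (v i) (∑ j, v.repr w j • v j) := by rw [hw]
    _ = ∑ j, v.repr w j • B (v i) (v j) := by
        rw [map_sum]
        exact Finset.sum_congr rfl fun j _ => by rw [_root_.map_smul]
    _ = 0 := by
        refine Finset.sum_eq_zero fun j _ => ?_
        rcases eq_or_ne i j with rfl | hij
        · rw [hzero, smul_zero]
        · rw [hv hij, smul_zero]
  have hs : ∀ i, ∃ s : K, s ^ 2 = B (v i) (v i) :=
    fun i => IsAlgClosed.exists_pow_nat_eq _ (by norm_num)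
  choose s hs2 using hs
  have hsne : ∀ i, s i ≠ 0 := by
    intro i h0
    exact hdne i (by rw [← hs2 i, h0]; ring)
  set b := v.unitsSMul fun i => (Units.mk0 (s i) (hsne i))⁻¹ with hbdef
  have hbi : ∀ i, b i = (s i)⁻¹ • v i := by
    intro i
    rw [hbdef, Basis.unitsSMul_apply, Units.smul_def]
    norm_num
  refine ⟨b, fun i j => ?_⟩
  rw [hbi, hbi, _root_.map_smul, _root_.map_smul, LinearMap.smul_apply,
    smul_eq_mul, smul_eq_mul]
  rcases eq_or_ne i j with rfl | hij
  · rw [if_pos rfl, ← hs2 i, pow_two]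
    field_simp
    exact div_self (hsne i)
  · rw [hv hij, if_neg hij, mul_zero, mul_zero]

lemma exists_congr_one {K : Type*} [Field K] [IsAlgClosed K] (h2 : (2 : K) ≠ 0)
    {m : ℕ} (A : Matrix (Fin m) (Fin m) K) (hsym : Aᵀ = A) (hunit : IsUnit A) :
    ∃ E : Matrix (Fin m) (Fin m) K, IsUnit E ∧ E * A * Eᵀ = 1 := by
  have hdet : IsUnit A.det := (Matrix.isUnit_iff_isUnit_det A).1 hunit
  set B : LinearMap.BilinForm K (Fin m → K) := LinearMap.mk₂ K
    (fun x y => x ᵥ* A ⬝ᵥ y)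
    (fun x x' y => by simp [Matrix.add_vecMul, add_dotProduct])
    (fun c x y => by simp [Matrix.smul_vecMul, smul_dotProduct])
    (fun x y y' => by simp [dotProduct_add])
    (fun c x y => by simp [dotProduct_smul])
    with hB
  have hBapp : ∀ x y, B x y = x ᵥ* A ⬝ᵥ y := fun x y => rfl
  have hBsym : B.IsSymm := by
    constructor; intro x y
    simp only [RingHom.id_apply, hBapp]
    rw [← Matrix.mulVec_transpose, dotProduct_comm,
      Matrix.dotProduct_mulVec, hsym]
  have hBnd : ∀ x, (∀ y, B x y = 0) → x = 0 := by
    intro x hx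
    have hxA : x ᵥ* A = 0 := by
      funext j
      have := hx (Pi.single j 1)
      rwa [hBapp, dotProduct_single, mul_one] at this
    have : x ᵥ* A ᵥ* A⁻¹ = 0 := by rw [hxA, Matrix.zero_vecMul]
    rwa [Matrix.vecMul_vecMul, Matrix.mul_nonsing_inv A hdet,
      Matrix.vecMul_one] at this
  obtain ⟨b0, hb0⟩ := exists_orthonormal_basis h2 B hBsym hBnd
  set b : Basis (Fin m) K (Fin m → K) := b0.reindex (finCongr (finrank_fin_fun K)) with hbdef
  have hb : ∀ i j : Fin m, B (b i) (b j) = if i = j then 1 else 0 := by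
    intro i j
    rw [hbdef, Basis.reindex_apply, Basis.reindex_apply, hb0]
    simp [Fin.ext_iff]
  have hmain : (Matrix.of fun i j => b i j) * A * (Matrix.of fun i j => b i j)ᵀ = 1 := by
    ext i j
    have : ((Matrix.of fun i j => b i j) * A * (Matrix.of fun i j => b i j)ᵀ) i j
        = B (b i) (b j) := by
      rw [hBapp]
      simp [Matrix.mul_apply, Matrix.vecMul, dotProduct,
        Matrix.transpose_apply, Finset.sum_mul]
    rw [this, hb, Matrix.one_apply]
  have hEunit : IsUnit (Matrix.of fun i j => b i j) := by
    rw [Matrix.isUnit_iff_isUnit_det]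
    have h1 : (Matrix.of fun i j => b i j) * (A * (Matrix.of fun i j => b i j)ᵀ) = 1 := by
      rw [← Matrix.mul_assoc]; exact hmain
    have := congrArg Matrix.det h1
    rw [Matrix.det_mul, Matrix.det_one] at this
    exact IsUnit.of_mul_eq_one _ this
  exact ⟨_, hEunit, hmain⟩




/-- A full-column-rank `n × r` matrix can be completed: `D = Q * Er` with `Q` invertible,
where `Er` is the canonical inclusion matrix. -/
lemma exists_isUnit_mul_eq {K : Type*} [Field K] {n r : ℕ} (hr : r ≤ n)
    (D : Matrix (Fin n) (Fin r) K) (hD : D.rank = r) :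
    ∃ Q : Matrix (Fin n) (Fin n) K, IsUnit Q ∧
      Q * (Matrix.of fun (i : Fin n) (j : Fin r) => if (i : ℕ) = (j : ℕ) then (1:K) else 0) = D := by
  classical
  set s : Submodule K (Fin n → K) := Submodule.span K (Set.range Dᵀ) with hs
  have hfs : finrank K s = r := by
    rw [hs]; exact (Matrix.rank_eq_finrank_span_cols D).symm.trans hD
  obtain ⟨p, hcompl⟩ := Submodule.exists_isCompl s
  have hfp : finrank K p = n - r := by
    have := Submodule.finrank_add_eq_of_isCompl hcompl
    rw [hfs, finrank_fin_fun] at this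
    omega
  set bp : Basis (Fin (n - r)) K p := (Module.finBasis K p).reindex (finCongr hfp) with hbp
  set u : Fin (n - r) → (Fin n → K) := fun j => (bp j : Fin n → K) with hu
  have hup : ∀ j, u j ∈ p := fun j => (bp j).2
  set q : Fin n → (Fin n → K) := fun i =>
    if h : (i : ℕ) < r then Dᵀ ⟨i, h⟩ else u ⟨(i : ℕ) - r, by omega⟩ with hq
  have hspanu : p ≤ Submodule.span K (Set.range q) := by
    intro x hx
    have hxspan : x ∈ Submodule.span K (Set.range u) := by
      have h1 : Submodule.map p.subtype ⊤ = p := Submodule.map_subtype_top p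
      rw [← bp.span_eq, Submodule.map_span] at h1
      rw [← h1] at hx
      have : p.subtype '' Set.range ⇑bp = Set.range u := by
        rw [← Set.range_comp]; rfl
      rwa [this] at hx
    refine Submodule.span_le.2 ?_ hxspan
    rintro y ⟨k, rfl⟩
    have hkn : (k : ℕ) + r < n := by omega
    have : q ⟨(k : ℕ) + r, hkn⟩ = u k := by
      rw [hq]
      have h1 : ¬ ((k : ℕ) + r < r) := by omega
      simp only [dif_neg h1]
      exact congrArg u (Fin.ext (by simp))
    rw [← this]
    exact Submodule.subset_span ⟨_, rfl⟩
  have htop : ⊤ ≤ Submodule.span K (Set.range q) := by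
    rw [← hcompl.sup_eq_top]
    refine sup_le ?_ hspanu
    rw [hs]
    refine Submodule.span_le.2 ?_
    rintro y ⟨k, rfl⟩
    have : Dᵀ k = q ⟨(k : ℕ), lt_of_lt_of_le k.2 hr⟩ := by
      rw [hq]
      simp only [dif_pos k.2, Fin.eta]
    rw [this]
    exact Submodule.subset_span ⟨_, rfl⟩
  have hcard : Fintype.card (Fin n) = finrank K (Fin n → K) := by
    rw [Fintype.card_fin, finrank_fin_fun]
  set bq := basisOfTopLeSpanOfCardEqFinrank q htop hcard with hbq
  have hbqc : ⇑bq = q := coe_basisOfTopLeSpanOfCardEqFinrank q htop hcard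
  set Q := (Pi.basisFun K (Fin n)).toMatrix ⇑bq with hQ
  have hQunit : IsUnit Q := by
    letI := Basis.invertibleToMatrix (Pi.basisFun K (Fin n)) bq
    exact isUnit_of_invertible Q
  have hQapp : ∀ i j, Q i j = q j i := by
    intro i j
    rw [hQ, Basis.toMatrix_apply, Pi.basisFun_repr, hbqc]
  refine ⟨Q, hQunit, ?_⟩
  ext i j
  rw [Matrix.mul_apply]
  rw [Finset.sum_eq_single (⟨(j : ℕ), lt_of_lt_of_le j.2 hr⟩ : Fin n)]
  · rw [hQapp]
    simp only [Matrix.of_apply, if_pos, if_true, mul_one]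
    rw [hq]
    simp only [dif_pos j.2]
    rw [Matrix.transpose_apply, Fin.eta]
  · intro k _ hk
    have : ¬ ((k : ℕ) = (j : ℕ)) := fun h => hk (Fin.ext h)
    simp [this]
  · intro h
    exact absurd (Finset.mem_univ _) h




lemma mul_transpose_apply {K : Type*} [CommRing K] {m1 m2 N : Type*} [Fintype N]
    (P : Matrix m1 N K) (Q : Matrix m2 N K) (i : m1) (j : m2) :
    (P * Qᵀ) i j = P i ⬝ᵥ Q j := by
  simp [Matrix.mul_apply, dotProduct]

lemma perm_mul_self {K : Type*} [Field K] {N : ℕ} (M : Matrix (Fin N) (Fin N) K)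
    (σ : Fin N → Fin N) (hσ : ∀ a b, M a b = if b = σ a then 1 else 0)
    (hinv : ∀ a, σ (σ a) = a) : M * M = 1 := by
  ext a b
  rw [Matrix.mul_apply, Finset.sum_eq_single (σ a)]
  · rw [hσ, hσ, if_pos rfl, one_mul, hinv, Matrix.one_apply]
    exact if_congr eq_comm rfl rfl
  · intro c _ hc
    rw [hσ a c, if_neg hc, zero_mul]
  · intro h; exact absurd (Finset.mem_univ _) h

/-- The involution underlying the split Gram matrix in Witt normal form. -/
def wittTau (N r : ℕ) : Fin N → Fin N := fun a =>
  if h : (a : ℕ) < r ∧ (a : ℕ) + r < N then ⟨(a : ℕ) + r, h.2⟩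
  else if h' : r ≤ (a : ℕ) ∧ (a : ℕ) < r + r then
    ⟨(a : ℕ) - r, lt_of_le_of_lt (Nat.sub_le _ _) a.2⟩
  else a

lemma wittTau_lt {N r : ℕ} (hrr : r + r ≤ N) (a : Fin N) (h : (a : ℕ) < r) :
    wittTau N r a = ⟨(a : ℕ) + r, by omega⟩ := by
  rw [wittTau, dif_pos ⟨h, by omega⟩]

lemma wittTau_mid {N r : ℕ} (a : Fin N) (h1 : r ≤ (a : ℕ)) (h2 : (a : ℕ) < r + r) :
    wittTau N r a = ⟨(a : ℕ) - r, by omega⟩ := by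
  rw [wittTau, dif_neg (by omega), dif_pos ⟨h1, h2⟩]

lemma wittTau_high {N r : ℕ} (a : Fin N) (h : r + r ≤ (a : ℕ)) :
    wittTau N r a = a := by
  rw [wittTau, dif_neg (by omega), dif_neg (by omega)]

lemma wittTau_invol {N r : ℕ} (hrr : r + r ≤ N) (a : Fin N) :
    wittTau N r (wittTau N r a) = a := by
  by_cases h1 : (a : ℕ) < r
  · rw [wittTau_lt hrr a h1, wittTau_mid _ (by simp) (by simp; omega)]
    exact Fin.ext (by simp)
  · by_cases h2 : (a : ℕ) < r + r
    · rw [wittTau_mid a (by omega) h2, wittTau_lt hrr _ (by simp; omega)]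
      exact Fin.ext (by simp; omega)
    · rw [wittTau_high a (by omega), wittTau_high a (by omega)]

/-- The Gram matrix of the Witt normal form basis. -/
def wittM (K : Type*) [Zero K] [One K] (N r : ℕ) : Matrix (Fin N) (Fin N) K :=
  Matrix.of fun a b => if b = wittTau N r a then 1 else 0

/-- The canonical rank-`r` isotropic `n × N` matrix. -/
def wittX (K : Type*) [Zero K] [One K] (n N r : ℕ) : Matrix (Fin n) (Fin N) K :=
  Matrix.of fun i j => if (i : ℕ) = (j : ℕ) ∧ (i : ℕ) < r then 1 else 0

lemma wittM_mul_self {K : Type*} [Field K] {N r : ℕ} (hrr : r + r ≤ N) :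
    wittM K N r * wittM K N r = 1 :=
  perm_mul_self _ (wittTau N r) (fun _ _ => rfl) (wittTau_invol hrr)

/-- Witt normal form for an isotropic matrix of rank `r` (dot-product form). -/
lemma witt_normal_form {K : Type*} [Field K] [IsAlgClosed K] (h2 : (2 : K) ≠ 0)
    {n N r : ℕ} (hrn : r ≤ n) (hrr : r + r ≤ N)
    (Y : Matrix (Fin n) (Fin N) K) (hYY : Y * Yᵀ = 0) (hrk : Y.rank = r) :
    ∃ (Q : Matrix (Fin n) (Fin n) K) (T : Matrix (Fin N) (Fin N) K),
      IsUnit Q ∧ IsUnit T ∧ T * Tᵀ = wittM K N r ∧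
      Y = Q * wittX K n N r * T := by
  classical
  set R : Submodule K (Fin N → K) := Submodule.span K (Set.range Y) with hR
  have hfR : finrank K R = r := by
    have h1 : Yᵀ.rank = finrank K (span K (Set.range Yᵀᵀ)) :=
      Matrix.rank_eq_finrank_span_cols Yᵀ
    rw [Matrix.transpose_transpose, Matrix.rank_transpose, hrk] at h1
    exact h1.symm
  set bR : Basis (Fin r) K R := (Module.finBasis K R).reindex (finCongr hfR) with hbR
  set w : Fin r → (Fin N → K) := fun i => (bR i : Fin N → K) with hw
  have hwR : ∀ i, w i ∈ R := fun i => (bR i).2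
  have hmem : ∀ x ∈ R, ∃ c : Fin n → K, x = c ᵥ* Y := by
    intro x hx
    have hx' : x ∈ LinearMap.range Y.vecMulLinear := by
      rw [range_vecMulLinear]; exact hx
    obtain ⟨c, hc⟩ := hx'
    exact ⟨c, by rw [← hc, Matrix.vecMulLinear_apply]⟩
  have hiso : ∀ x ∈ R, ∀ z ∈ R, x ⬝ᵥ z = 0 := by
    intro x hx z hz
    obtain ⟨c, rfl⟩ := hmem x hx
    obtain ⟨e, rfl⟩ := hmem z hz
    rw [← Matrix.mulVec_transpose Y e, Matrix.dotProduct_mulVec, Matrix.vecMul_vecMul,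
      hYY, Matrix.vecMul_zero, zero_dotProduct]
  set Wmat : Matrix (Fin r) (Fin N) K := Matrix.of w with hWmat
  have hWW : Wmat * Wmatᵀ = 0 := by
    ext i j
    rw [mul_transpose_apply, Matrix.zero_apply]
    exact hiso _ (hwR i) _ (hwR j)
  have hspanW : span K (Set.range Wmat) = R := by
    have h1 : Submodule.map R.subtype ⊤ = R := Submodule.map_subtype_top R
    rw [← bR.span_eq, Submodule.map_span] at h1
    rw [← h1]
    congr 1
    rw [← Set.range_comp]
    rfl
  have hrankW : Wmat.rank = r := by
    have h1 : Wmatᵀ.rank = finrank K (span K (Set.range Wmatᵀᵀ)) :=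
      Matrix.rank_eq_finrank_span_cols Wmatᵀ
    rw [Matrix.transpose_transpose, Matrix.rank_transpose, hspanW, hfR] at h1
    exact h1
  have hWsurj : ∀ g : Fin r → K, ∃ x, Wmat *ᵥ x = g := by
    have hrange : LinearMap.range Wmat.mulVecLin = ⊤ := by
      apply Submodule.eq_top_of_finrank_eq
      rw [finrank_fin_fun]
      exact hrankW
    intro g
    have : g ∈ LinearMap.range Wmat.mulVecLin := by rw [hrange]; trivial
    obtain ⟨x, hx⟩ := this
    exact ⟨x, by rw [← hx, Matrix.mulVecLin_apply]⟩
  choose y hy using fun j => hWsurj (Pi.single j 1)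
  set Ym : Matrix (Fin r) (Fin N) K := Matrix.of y with hYm
  have hWY : Wmat * Ymᵀ = 1 := by
    ext i j
    rw [mul_transpose_apply]
    have : Wmat i ⬝ᵥ Ym j = (Wmat *ᵥ y j) i := rfl
    rw [this, hy j, Matrix.one_apply, Pi.single_apply]
  have hYW : Ym * Wmatᵀ = 1 := by
    have := congrArg Matrix.transpose hWY
    rwa [Matrix.transpose_mul, Matrix.transpose_transpose, Matrix.transpose_one] at this
  set G : Matrix (Fin r) (Fin r) K := Ym * Ymᵀ with hG
  have hGsym : Gᵀ = G := by
    rw [hG, Matrix.transpose_mul, Matrix.transpose_transpose]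
  set Vm : Matrix (Fin r) (Fin N) K := Ym - (2⁻¹ : K) • (G * Wmat) with hVm
  have hVmT : Vmᵀ = Ymᵀ - (2⁻¹ : K) • (Wmatᵀ * Gᵀ) := by
    rw [hVm, Matrix.transpose_sub, Matrix.transpose_smul, Matrix.transpose_mul]
  have hWV : Wmat * Vmᵀ = 1 := by
    rw [hVmT, Matrix.mul_sub, hWY, Matrix.mul_smul, ← Matrix.mul_assoc, hWW,
      Matrix.zero_mul, smul_zero, sub_zero]
  have hVW : Vm * Wmatᵀ = 1 := by
    have := congrArg Matrix.transpose hWV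
    rwa [Matrix.transpose_mul, Matrix.transpose_transpose, Matrix.transpose_one] at this
  have hYV : Ym * Vmᵀ = G - (2⁻¹ : K) • G := by
    rw [hVmT, Matrix.mul_sub, Matrix.mul_smul, ← Matrix.mul_assoc, hYW,
      Matrix.one_mul, hGsym, hG]
  have hGWV : (G * Wmat) * Vmᵀ = G := by
    rw [Matrix.mul_assoc, hWV, Matrix.mul_one]
  have hVV : Vm * Vmᵀ = 0 := by
    rw [hVm, Matrix.sub_mul, hYV, Matrix.smul_mul, hGWV]
    rw [sub_sub, ← add_smul]
    have : (2⁻¹ : K) + 2⁻¹ = 1 := by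
      rw [← two_mul, mul_inv_cancel₀ h2]
    rw [this, one_smul, sub_self]
  -- the stacked matrix and its kernel
  set Afrom : Matrix (Fin r ⊕ Fin r) (Fin N) K := Matrix.fromRows Wmat Vm with hAfrom
  set H : Matrix (Fin r ⊕ Fin r) (Fin r ⊕ Fin r) K := Matrix.fromBlocks 0 1 1 0 with hH
  have hGram : Afrom * Afromᵀ = H := by
    rw [hAfrom, Matrix.transpose_fromRows, Matrix.fromRows_mul_fromCols,
      hWW, hWV, hVW, hVV, hH]
  have hHH : H * H = 1 := by
    rw [hH, Matrix.fromBlocks_multiply]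
    simp
  have hHunit : IsUnit H := by
    rw [Matrix.isUnit_iff_isUnit_det]
    have := congrArg Matrix.det hHH
    rw [Matrix.det_mul, Matrix.det_one] at this
    exact IsUnit.of_mul_eq_one _ this
  have hrankA : Afrom.rank = r + r := by
    refine le_antisymm (le_trans (Matrix.rank_le_card_height Afrom) (by simp)) ?_
    have h1 : (Afrom * Afromᵀ).rank ≤ Afrom.rank := Matrix.rank_mul_le_left _ _
    rw [hGram, Matrix.rank_of_isUnit H hHunit] at h1
    simpa using h1
  set Kr : Submodule K (Fin N → K) := LinearMap.ker Afrom.mulVecLin with hKr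
  have hfKr : finrank K Kr = N - (r + r) := by
    have h1 := LinearMap.finrank_range_add_finrank_ker Afrom.mulVecLin
    have h2' : finrank K (LinearMap.range Afrom.mulVecLin) = r + r := hrankA
    rw [finrank_fin_fun, h2', ← hKr] at h1
    omega
  have hKrmem : ∀ x : Fin N → K, x ∈ Kr ↔ Afrom *ᵥ x = 0 := by
    intro x
    rw [hKr, LinearMap.mem_ker, Matrix.mulVecLin_apply]
  set BK : LinearMap.BilinForm K Kr := LinearMap.mk₂ K
    (fun x y : Kr => (x : Fin N → K) ⬝ᵥ (y : Fin N → K))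
    (fun x x' y => by simp [add_dotProduct])
    (fun c x y => by simp [smul_dotProduct])
    (fun x y y' => by simp [dotProduct_add])
    (fun c x y => by simp [dotProduct_smul]) with hBK
  have hBKapp : ∀ x y : Kr, BK x y = (x : Fin N → K) ⬝ᵥ (y : Fin N → K) := fun x y => rfl
  have hBKsym : BK.IsSymm := by
    constructor; intro x y
    simp only [RingHom.id_apply, hBKapp]
    exact dotProduct_comm _ _
  have hBKnd : ∀ x : Kr, (∀ z : Kr, BK x z = 0) → x = 0 := by
    intro x hx
    have hxz : ∀ z : Fin N → K, (x : Fin N → K) ⬝ᵥ z = 0 := by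
      intro z
      set c : (Fin r ⊕ Fin r) → K := H *ᵥ (Afrom *ᵥ z) with hc
      set z0 : Fin N → K := z - Afromᵀ *ᵥ c with hz0
      have hz0K : z0 ∈ Kr := by
        rw [hKrmem, hz0, Matrix.mulVec_sub, hc, Matrix.mulVec_mulVec, hGram,
          Matrix.mulVec_mulVec, hHH, Matrix.one_mulVec, sub_self]
      have hdz0 : (x : Fin N → K) ⬝ᵥ z0 = 0 := hx ⟨z0, hz0K⟩
      have hAx : Afrom *ᵥ (x : Fin N → K) = 0 := (hKrmem _).1 x.2
      have hdc : (x : Fin N → K) ⬝ᵥ (Afromᵀ *ᵥ c) = 0 := by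
        rw [Matrix.dotProduct_mulVec, Matrix.vecMul_transpose, hAx,
          zero_dotProduct]
      have hzsplit : z = z0 + Afromᵀ *ᵥ c := by rw [hz0, sub_add_cancel]
      rw [hzsplit, dotProduct_add, hdz0, hdc, add_zero]
    have hx0 : (x : Fin N → K) = 0 := by
      funext j
      have := hxz (Pi.single j 1)
      rwa [dotProduct_single, mul_one] at this
    exact Subtype.ext hx0
  obtain ⟨bu0, hbu0⟩ := exists_orthonormal_basis h2 BK hBKsym hBKnd
  set bu : Basis (Fin (N - (r + r))) K Kr := bu0.reindex (finCongr hfKr) with hbu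
  set u : Fin (N - (r + r)) → (Fin N → K) := fun j => (bu j : Fin N → K) with hu
  have huu : ∀ i j, u i ⬝ᵥ u j = if i = j then 1 else 0 := by
    intro i j
    have h1 : u i ⬝ᵥ u j = BK (bu i) (bu j) := (hBKapp _ _).symm
    rw [h1, hbu, Basis.reindex_apply, Basis.reindex_apply, hbu0]
    simp [Fin.ext_iff]
  have huK : ∀ j, Afrom *ᵥ u j = 0 := fun j => (hKrmem _).1 (bu j).2
  have hWu : ∀ i j, Wmat i ⬝ᵥ u j = 0 := by
    intro i j
    simpa [hAfrom, Matrix.fromRows_mulVec, Matrix.mulVec] using congrFun (huK j) (Sum.inl i)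
  have hVu : ∀ i j, Vm i ⬝ᵥ u j = 0 := by
    intro i j
    simpa [hAfrom, Matrix.fromRows_mulVec, Matrix.mulVec] using congrFun (huK j) (Sum.inr i)
  have huW : ∀ i j, u i ⬝ᵥ Wmat j = 0 := fun i j => by
    rw [dotProduct_comm]; exact hWu j i
  have huV : ∀ i j, u i ⬝ᵥ Vm j = 0 := fun i j => by
    rw [dotProduct_comm]; exact hVu j i
  have hww' : ∀ i j, Wmat i ⬝ᵥ Wmat j = 0 := by
    intro i j
    have := Matrix.ext_iff.2 hWW i j
    rw [mul_transpose_apply] at this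
    simpa using this
  have hwv' : ∀ i j, Wmat i ⬝ᵥ Vm j = if i = j then (1:K) else 0 := by
    intro i j
    have := Matrix.ext_iff.2 hWV i j
    rw [mul_transpose_apply] at this
    rwa [Matrix.one_apply] at this
  have hvw' : ∀ i j, Vm i ⬝ᵥ Wmat j = if i = j then (1:K) else 0 := by
    intro i j
    have := Matrix.ext_iff.2 hVW i j
    rw [mul_transpose_apply] at this
    rwa [Matrix.one_apply] at this
  have hvv' : ∀ i j, Vm i ⬝ᵥ Vm j = 0 := by
    intro i j
    have := Matrix.ext_iff.2 hVV i j
    rw [mul_transpose_apply] at this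
    simpa using this
  set t : Fin N → (Fin N → K) := fun a =>
    if h : (a : ℕ) < r then Wmat ⟨(a : ℕ), h⟩
    else if h' : (a : ℕ) < r + r then Vm ⟨(a : ℕ) - r, by omega⟩
    else u ⟨(a : ℕ) - (r + r), by omega⟩ with ht
  have ht_lo : ∀ (a : Fin N) (h : (a : ℕ) < r), t a = Wmat ⟨(a : ℕ), h⟩ := by
    intro a h
    simp only [ht]
    rw [dif_pos h]
  have ht_mid : ∀ (a : Fin N) (h1 : r ≤ (a : ℕ)) (h2 : (a : ℕ) < r + r),
      t a = Vm ⟨(a : ℕ) - r, by omega⟩ := by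
    intro a h1 h2
    simp only [ht]
    rw [dif_neg (by omega), dif_pos h2]
  have ht_hi : ∀ (a : Fin N) (h1 : r + r ≤ (a : ℕ)),
      t a = u ⟨(a : ℕ) - (r + r), by omega⟩ := by
    intro a h1
    simp only [ht]
    rw [dif_neg (by omega), dif_neg (by omega)]
  set T : Matrix (Fin N) (Fin N) K := Matrix.of t with hT
  have hTapp : ∀ a, T a = t a := fun a => rfl
  have hMapp : ∀ a b, wittM K N r a b = if b = wittTau N r a then (1:K) else 0 :=
    fun a b => rfl
  have hTT : T * Tᵀ = wittM K N r := by
    ext a b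
    rw [mul_transpose_apply, hTapp, hTapp, hMapp]
    by_cases ha1 : (a : ℕ) < r
    · rw [ht_lo a ha1, wittTau_lt hrr a ha1]
      by_cases hb1 : (b : ℕ) < r
      · rw [ht_lo b hb1, hww', if_neg (by simp [Fin.ext_iff]; omega)]
      · by_cases hb2 : (b : ℕ) < r + r
        · rw [ht_mid b (by omega) hb2, hwv']
          exact if_congr (by simp [Fin.ext_iff]; omega) rfl rfl
        · rw [ht_hi b (by omega), hWu, if_neg (by simp [Fin.ext_iff]; omega)]
    · by_cases ha2 : (a : ℕ) < r + r
      · rw [ht_mid a (by omega) ha2, wittTau_mid a (by omega) ha2]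
        by_cases hb1 : (b : ℕ) < r
        · rw [ht_lo b hb1, hvw']
          exact if_congr (by simp [Fin.ext_iff]; omega) rfl rfl
        · by_cases hb2 : (b : ℕ) < r + r
          · rw [ht_mid b (by omega) hb2, hvv', if_neg (by simp [Fin.ext_iff]; omega)]
          · rw [ht_hi b (by omega), hVu, if_neg (by simp [Fin.ext_iff]; omega)]
      · rw [ht_hi a (by omega), wittTau_high a (by omega)]
        by_cases hb1 : (b : ℕ) < r
        · rw [ht_lo b hb1, huW, if_neg (by simp [Fin.ext_iff]; omega)]
        · by_cases hb2 : (b : ℕ) < r + r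
          · rw [ht_mid b (by omega) hb2, huV, if_neg (by simp [Fin.ext_iff]; omega)]
          · rw [ht_hi b (by omega), huu]
            exact if_congr (by constructor <;> (intro hcase; rw [Fin.ext_iff] at *; simp at *; omega)) rfl rfl
  have hMM : wittM K N r * wittM K N r = 1 := wittM_mul_self hrr
  have hTunit : IsUnit T := by
    rw [Matrix.isUnit_iff_isUnit_det]
    have h1 : T * (Tᵀ * wittM K N r) = 1 := by
      rw [← Matrix.mul_assoc, hTT, hMM]
    have := congrArg Matrix.det h1
    rw [Matrix.det_mul, Matrix.det_one] at this
    exact IsUnit.of_mul_eq_one _ this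
  -- decompose Y through the row space basis
  have hYmem : ∀ i, Y i ∈ R := fun i => Submodule.subset_span ⟨i, rfl⟩
  set D : Matrix (Fin n) (Fin r) K :=
    Matrix.of fun i k => bR.repr ⟨Y i, hYmem i⟩ k with hD
  have hDW : D * Wmat = Y := by
    ext i j
    have hsum := bR.sum_repr ⟨Y i, hYmem i⟩
    have h1 := congrArg (fun z : R => (z : Fin N → K) j) hsum
    simp only [AddSubmonoidClass.coe_finset_sum, SetLike.val_smul, Finset.sum_apply,
      Pi.smul_apply, smul_eq_mul] at h1
    rw [Matrix.mul_apply]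
    exact h1
  have hrankD : D.rank = r := by
    refine le_antisymm (le_trans (Matrix.rank_le_card_width D) (by simp)) ?_
    calc r = Y.rank := hrk.symm
    _ = (D * Wmat).rank := by rw [hDW]
    _ ≤ D.rank := Matrix.rank_mul_le_left _ _
  obtain ⟨Q, hQu, hQE⟩ := exists_isUnit_mul_eq hrn D hrankD
  have hEW : (Matrix.of fun (i : Fin n) (j : Fin r) =>
      if (i : ℕ) = (j : ℕ) then (1:K) else 0) * Wmat = wittX K n N r * T := by
    ext i j
    rw [Matrix.mul_apply, Matrix.mul_apply]
    by_cases hi : (i : ℕ) < r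
    · rw [Finset.sum_eq_single (⟨(i : ℕ), hi⟩ : Fin r),
        Finset.sum_eq_single (⟨(i : ℕ), by omega⟩ : Fin N)]
      · show (if ((i:ℕ) = (i:ℕ)) then (1:K) else 0) * Wmat ⟨(i:ℕ), hi⟩ j
          = wittX K n N r i ⟨(i:ℕ), by omega⟩ * T ⟨(i:ℕ), by omega⟩ j
        rw [if_pos rfl, one_mul, hTapp, ht_lo _ (by simp [hi])]
        have hX1 : wittX K n N r i ⟨(i:ℕ), by omega⟩ = 1 := by
          show (if ((i:ℕ) = (i:ℕ) ∧ (i:ℕ) < r) then (1:K) else 0) = 1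
          rw [if_pos ⟨rfl, hi⟩]
        rw [hX1, one_mul]
      · intro c _ hc
        have : ¬((i : ℕ) = (c : ℕ) ∧ (i : ℕ) < r) := by
          rintro ⟨h1, -⟩
          exact hc (Fin.ext h1.symm)
        show (if ((i:ℕ) = (c:ℕ) ∧ (i:ℕ) < r) then (1:K) else 0) * T c j = 0
        rw [if_neg this, zero_mul]
      · intro h; exact absurd (Finset.mem_univ _) h
      · intro k _ hk
        have : ¬((i : ℕ) = (k : ℕ)) := fun h => hk (Fin.ext h.symm)
        show (if ((i:ℕ) = (k:ℕ)) then (1:K) else 0) * Wmat k j = 0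
        rw [if_neg this, zero_mul]
      · intro h; exact absurd (Finset.mem_univ _) h
    · rw [Finset.sum_eq_zero, Finset.sum_eq_zero]
      · intro c _
        have : ¬((i : ℕ) = (c : ℕ) ∧ (i : ℕ) < r) := fun h => hi h.2
        show (if ((i:ℕ) = (c:ℕ) ∧ (i:ℕ) < r) then (1:K) else 0) * T c j = 0
        rw [if_neg this, zero_mul]
      · intro k _
        have : ¬((i : ℕ) = (k : ℕ)) := fun h => hi (h ▸ k.2)
        show (if ((i:ℕ) = (k:ℕ)) then (1:K) else 0) * Wmat k j = 0
        rw [if_neg this, zero_mul]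
  refine ⟨Q, T, hQu, hTunit, hTT, ?_⟩
  rw [← hDW, ← hQE, Matrix.mul_assoc, hEW, ← Matrix.mul_assoc]
lemma congr_step {K : Type*} [CommRing K] {m : Type*} [Fintype m]
    (U V J₁ J₂ J₃ : Matrix m m K)
    (h1 : U * J₁ * Uᵀ = J₂) (h2 : V * J₂ * Vᵀ = J₃) :
    (V * U) * J₁ * (V * U)ᵀ = J₃ := by
  have h3 : (V * U) * J₁ * (V * U)ᵀ = V * (U * J₁ * Uᵀ) * Vᵀ := by
    rw [Matrix.transpose_mul]
    simp only [Matrix.mul_assoc]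
  rw [h3, h1, h2]

/-- Two `n × N` matrices whose row spaces are isotropic for the
standard split symmetric bilinear form `J` on `K^N` (`N = 2n + 2d + d'`), i.e.
satisfying `X J Xᵀ = 0`, have the same rank if and only if they differ by the action
of `GL_n(K) × O_N(K)`: `X' = P X S` with `P` invertible and `S J Sᵀ = J`. -/
theorem orthogonal_littlewood_orbit_classification
    (K : Type*) [Field K] [IsAlgClosed K] (hchar : ringChar K ≠ 2)
    (n d d' : ℕ) (hn : 1 ≤ n) (hd' : d' ≤ 1) (N : ℕ) (hN : N = 2 * n + 2 * d + d')
    (J : Matrix (Fin N) (Fin N) K)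
    (hJ : ∀ a b : Fin N, J a b =
      if (a.1 % 2 = 0 ∧ b.1 = a.1 + 1) ∨ (b.1 % 2 = 0 ∧ a.1 = b.1 + 1) then 1
      else if a = b ∧ a.1 = 2 * (n + d) then 1 else 0)
    (X X' : Matrix (Fin n) (Fin N) K)
    (hX : X * J * X.transpose = 0) (hX' : X' * J * X'.transpose = 0) :
    X.rank = X'.rank ↔
      ∃ (P : Matrix (Fin n) (Fin n) K) (S : Matrix (Fin N) (Fin N) K),
        IsUnit P ∧ S * J * S.transpose = J ∧ X' = P * X * S := by
  classical
  have h2 : (2 : K) ≠ 0 := Ring.two_ne_zero hchar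
  set σ : Fin N → Fin N := fun a =>
    if h : (a : ℕ) % 2 = 0 ∧ (a : ℕ) + 1 < N then ⟨(a : ℕ) + 1, h.2⟩
    else if h' : (a : ℕ) % 2 = 1 then ⟨(a : ℕ) - 1, lt_of_le_of_lt (Nat.sub_le _ _) a.2⟩
    else a with hσdef
  have hσ_even : ∀ (a : Fin N) (h0 : (a : ℕ) % 2 = 0) (h1 : (a : ℕ) + 1 < N),
      σ a = ⟨(a : ℕ) + 1, h1⟩ := by
    intro a h0 h1
    simp only [hσdef]
    rw [dif_pos ⟨h0, h1⟩]
  have hσ_odd : ∀ (a : Fin N) (h0 : (a : ℕ) % 2 = 1),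
      σ a = ⟨(a : ℕ) - 1, by omega⟩ := by
    intro a h0
    simp only [hσdef]
    rw [dif_neg (by omega), dif_pos h0]
  have hσ_fix : ∀ (a : Fin N) (h0 : (a : ℕ) % 2 = 0) (h1 : ¬((a : ℕ) + 1 < N)),
      σ a = a := by
    intro a h0 h1
    simp only [hσdef]
    rw [dif_neg (by omega), dif_neg (by omega)]
  have hJσ : ∀ a b : Fin N, J a b = if b = σ a then 1 else 0 := by
    intro a b
    rw [hJ]
    by_cases h0 : (a : ℕ) % 2 = 0
    · by_cases h1 : (a : ℕ) + 1 < N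
      · rw [hσ_even a h0 h1]
        have hc2 : ¬(a = b ∧ (a : ℕ) = 2 * (n + d)) := by
          rintro ⟨rfl, hx⟩
          omega
        rw [if_neg hc2]
        refine if_congr ?_ rfl rfl
        constructor
        · rintro (⟨-, hb⟩ | ⟨hb0, hb⟩)
          · exact Fin.ext hb
          · exfalso; omega
        · intro hb
          exact Or.inl ⟨h0, by rw [hb]⟩
      · have ha : (a : ℕ) = 2 * (n + d) := by omega
        rw [hσ_fix a h0 h1]
        have hc1 : ¬(((a : ℕ) % 2 = 0 ∧ (b : ℕ) = (a : ℕ) + 1) ∨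
            ((b : ℕ) % 2 = 0 ∧ (a : ℕ) = (b : ℕ) + 1)) := by
          rintro (⟨-, hb⟩ | ⟨hb0, hb⟩)
          · have := b.2; omega
          · omega
        rw [if_neg hc1]
        refine if_congr ?_ rfl rfl
        constructor
        · rintro ⟨rfl, -⟩; rfl
        · rintro rfl; exact ⟨rfl, ha⟩
    · have h0' : (a : ℕ) % 2 = 1 := by omega
      rw [hσ_odd a h0']
      have hc2 : ¬(a = b ∧ (a : ℕ) = 2 * (n + d)) := by
        rintro ⟨rfl, hx⟩
        omega
      rw [if_neg hc2]
      refine if_congr ?_ rfl rfl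
      constructor
      · rintro (⟨ha0, -⟩ | ⟨hb0, hb⟩)
        · omega
        · exact Fin.ext (show (b : ℕ) = (a : ℕ) - 1 by omega)
      · intro hb
        have hb1 : (b : ℕ) = (a : ℕ) - 1 := by rw [hb]
        exact Or.inr ⟨by omega, by omega⟩
  have hσinv : ∀ a, σ (σ a) = a := by
    intro a
    by_cases h0 : (a : ℕ) % 2 = 0
    · by_cases h1 : (a : ℕ) + 1 < N
      · rw [hσ_even a h0 h1, hσ_odd _ (by simp; omega)]
        exact Fin.ext (by simp)
      · rw [hσ_fix a h0 h1, hσ_fix a h0 h1]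
    · have h0' : (a : ℕ) % 2 = 1 := by omega
      rw [hσ_odd a h0', hσ_even _ (by simp; omega) (by simp; omega)]
      exact Fin.ext (by simp; omega)
  have hJJ : J * J = 1 := perm_mul_self J σ hJσ hσinv
  have hJdet : IsUnit J.det := by
    have := congrArg Matrix.det hJJ
    rw [Matrix.det_mul, Matrix.det_one] at this
    exact IsUnit.of_mul_eq_one _ this
  have hJsym : Jᵀ = J := by
    ext a b
    rw [Matrix.transpose_apply, hJσ, hJσ]
    refine if_congr ?_ rfl rfl
    constructor
    · rintro rfl; rw [hσinv]
    · rintro rfl; rw [hσinv]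
  obtain ⟨E, hEu, hE1⟩ := exists_congr_one h2 J hJsym ((Matrix.isUnit_iff_isUnit_det J).2 hJdet)
  have hEdet : IsUnit E.det := (Matrix.isUnit_iff_isUnit_det E).1 hEu
  have hEE : E * E⁻¹ = 1 := Matrix.mul_nonsing_inv E hEdet
  have hEE' : E⁻¹ * E = 1 := Matrix.nonsing_inv_mul E hEdet
  have hEidet : IsUnit E⁻¹.det := by
    have := congrArg Matrix.det hEE'
    rw [Matrix.det_mul, Matrix.det_one] at this
    exact IsUnit.of_mul_eq_one _ this
  have hETdet : IsUnit Eᵀ.det := by rw [Matrix.det_transpose]; exact hEdet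
  have hJdec : J = E⁻¹ * E⁻¹ᵀ := by
    calc J = (E⁻¹ * E) * J * (Eᵀ * Eᵀ⁻¹) := by
          rw [hEE', Matrix.mul_nonsing_inv _ hETdet, Matrix.one_mul, Matrix.mul_one]
    _ = E⁻¹ * (E * J * Eᵀ) * Eᵀ⁻¹ := by simp only [Matrix.mul_assoc]
    _ = E⁻¹ * Eᵀ⁻¹ := by rw [hE1, Matrix.mul_one]
    _ = E⁻¹ * E⁻¹ᵀ := by rw [Matrix.transpose_nonsing_inv]
  have hisoE : ∀ (Z : Matrix (Fin n) (Fin N) K), Z * J * Zᵀ = 0 →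
      (Z * E⁻¹) * (Z * E⁻¹)ᵀ = 0 := by
    intro Z hZ
    calc (Z * E⁻¹) * (Z * E⁻¹)ᵀ = Z * (E⁻¹ * E⁻¹ᵀ) * Zᵀ := by
          rw [Matrix.transpose_mul]
          simp only [Matrix.mul_assoc]
    _ = Z * J * Zᵀ := by rw [← hJdec]
    _ = 0 := hZ
  have hrkY : (X * E⁻¹).rank = X.rank :=
    Matrix.rank_mul_eq_left_of_isUnit_det E⁻¹ X hEidet
  have hrkY' : (X' * E⁻¹).rank = X'.rank :=
    Matrix.rank_mul_eq_left_of_isUnit_det E⁻¹ X' hEidet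
  constructor
  · intro hrank
    have hrn : X.rank ≤ n := le_trans (Matrix.rank_le_card_height X) (by simp)
    have hrr : X.rank + X.rank ≤ N := by omega
    obtain ⟨Q, T, hQu, hTu, hTT, hYQT⟩ :=
      witt_normal_form h2 hrn hrr (X * E⁻¹) (hisoE X hX) hrkY
    obtain ⟨Q', T', hQ'u, hT'u, hT'T', hY'QT⟩ :=
      witt_normal_form h2 hrn hrr (X' * E⁻¹) (hisoE X' hX')
        (by rw [hrkY', ← hrank])
    have hQdet : IsUnit Q.det := (Matrix.isUnit_iff_isUnit_det Q).1 hQu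
    have hTdet : IsUnit T.det := (Matrix.isUnit_iff_isUnit_det T).1 hTu
    have hTTdet : IsUnit Tᵀ.det := by rw [Matrix.det_transpose]; exact hTdet
    have hTTinv : T * T⁻¹ = 1 := Matrix.mul_nonsing_inv T hTdet
    have hTinvT : T⁻¹ * T = 1 := Matrix.nonsing_inv_mul T hTdet
    have hQinvQ : Q⁻¹ * Q = 1 := Matrix.nonsing_inv_mul Q hQdet
    refine ⟨Q' * Q⁻¹, E⁻¹ * ((T⁻¹ * T') * E), ?_, ?_, ?_⟩
    · refine hQ'u.mul ((Matrix.isUnit_iff_isUnit_det _).2 ?_)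
      have := congrArg Matrix.det hQinvQ
      rw [Matrix.det_mul, Matrix.det_one] at this
      exact IsUnit.of_mul_eq_one _ this
    · -- the orthogonality of S
      have hMinv : T⁻¹ * wittM K N X.rank * T⁻¹ᵀ = 1 := by
        rw [← hTT, ← Matrix.mul_assoc T⁻¹ T Tᵀ, hTinvT, Matrix.one_mul,
          Matrix.transpose_nonsing_inv, Matrix.mul_nonsing_inv _ hTTdet]
      have hT'step : T' * 1 * T'ᵀ = wittM K N X.rank := by
        rw [Matrix.mul_one, hT'T']
      have hS0 : (T⁻¹ * T') * 1 * (T⁻¹ * T')ᵀ = 1 :=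
        congr_step T' T⁻¹ 1 (wittM K N X.rank) 1 hT'step hMinv
      have step1 : ((T⁻¹ * T') * E) * J * ((T⁻¹ * T') * E)ᵀ = 1 :=
        congr_step E (T⁻¹ * T') J 1 1 hE1 hS0
      have hJdecE : E⁻¹ * 1 * E⁻¹ᵀ = J := by
        rw [Matrix.mul_one]
        exact hJdec.symm
      exact congr_step ((T⁻¹ * T') * E) E⁻¹ J 1 J step1 hJdecE
    · have hX'Y : X' = (X' * E⁻¹) * E := by
        rw [Matrix.mul_assoc, hEE', Matrix.mul_one]
      calc X' = (X' * E⁻¹) * E := hX'Y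
      _ = Q' * wittX K n N X.rank * T' * E := by rw [hY'QT]
      _ = (Q' * Q⁻¹) * X * (E⁻¹ * ((T⁻¹ * T') * E)) := by
          calc Q' * wittX K n N X.rank * T' * E
              = Q' * (wittX K n N X.rank * (T' * E)) := by simp only [Matrix.mul_assoc]
          _ = Q' * (Q⁻¹ * (Q * (wittX K n N X.rank * (T' * E)))) := by
              rw [← Matrix.mul_assoc Q⁻¹ Q, hQinvQ, Matrix.one_mul]
          _ = Q' * (Q⁻¹ * (Q * (wittX K n N X.rank * (T * (T⁻¹ * (T' * E)))))) := by
              rw [← Matrix.mul_assoc T T⁻¹, hTTinv, Matrix.one_mul]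
          _ = Q' * (Q⁻¹ * (((Q * wittX K n N X.rank * T) * (T⁻¹ * (T' * E))))) := by
              simp only [Matrix.mul_assoc]
          _ = Q' * (Q⁻¹ * ((X * E⁻¹) * (T⁻¹ * (T' * E)))) := by rw [← hYQT]
          _ = (Q' * Q⁻¹) * X * (E⁻¹ * ((T⁻¹ * T') * E)) := by
              simp only [Matrix.mul_assoc]
  · rintro ⟨P, S, hPu, hSJ, rfl⟩
    have hSdet : IsUnit S.det := by
      have h1 : S * (J * Sᵀ * J) = 1 := by
        calc S * (J * Sᵀ * J) = (S * J * Sᵀ) * J := by simp only [Matrix.mul_assoc]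
        _ = J * J := by rw [hSJ]
        _ = 1 := hJJ
      have := congrArg Matrix.det h1
      rw [Matrix.det_mul, Matrix.det_one] at this
      exact IsUnit.of_mul_eq_one _ this
    have hPdet : IsUnit P.det := (Matrix.isUnit_iff_isUnit_det P).1 hPu
    rw [Matrix.rank_mul_eq_left_of_isUnit_det S (P * X) hSdet,
      Matrix.rank_mul_eq_right_of_isUnit_det P X hPdet]
end

section
/- The nm quadrics g_{j,i} (the entries of the product Y X of the two generic matrices) form a regular sequence in the polynomial ring A. In particular, the coordinate ring B = A/Q of the variety of length-2 complexes is a complete intersection. (Proposition 5.1(e).) -/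
set_option autoImplicit false
set_option linter.unusedSectionVars false
set_option linter.unusedVariables false

open MvPolynomial

namespace VOCAux

variable {K : Type*} [CommRing K] {σ ι : Type*} [DecidableEq σ]

/-- The exponent of the leading monomial of the `t`-th quadric. -/
noncomputable def Em (u v : ι → σ) (t : ι) : σ →₀ ℕ :=
  Finsupp.single (u t) 1 + Finsupp.single (v t) 1

/-- The leading monomial itself. -/
noncomputable def mu (K : Type*) [CommRing K] (u v : ι → σ) (t : ι) : MvPolynomial σ K :=
  monomial (Em u v t) 1

/-- The weighted degree of the leading monomial. -/
def dd (w : σ → ℕ) (u v : ι → σ) (t : ι) : ℕ := w (u t) + w (v t)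

section Basic

variable {u v : ι → σ} (huv : Function.Injective (Sum.elim u v))

include huv in
lemma uv_ne (t s : ι) : u t ≠ v s := fun h => by
  have := huv (a₁ := Sum.inl t) (a₂ := Sum.inr s) (by simpa using h)
  simp at this

lemma Em_apply (t : ι) (x : σ) (h : u t ≠ v t) :
    Em u v t x = (if x = u t then 1 else 0) + (if x = v t then 1 else 0) := by
  simp only [Em, Finsupp.add_apply, Finsupp.single_apply]
  congr 1 <;> simp [eq_comm]

include huv in
lemma le_Em_iff (t : ι) (ν : σ →₀ ℕ) :
    Em u v t ≤ ν ↔ 1 ≤ ν (u t) ∧ 1 ≤ ν (v t) := by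
  have hne := uv_ne huv t t
  rw [Finsupp.le_def]
  constructor
  · intro h
    refine ⟨le_trans ?_ (h (u t)), le_trans ?_ (h (v t))⟩ <;>
      simp [Em_apply t _ hne, hne.symm, hne]
  · intro ⟨h1, h2⟩ x
    rw [Em_apply t x hne]
    by_cases hx : x = u t
    · by_cases hx' : x = v t
      · exact absurd (hx ▸ hx') hne
      · simp only [hx, hx', if_pos rfl, if_neg (hx ▸ hx' : ¬ u t = v t), add_zero]
        exact h1
    · by_cases hx' : x = v t
      · simp only [hx, hx', if_neg (hx' ▸ hx : ¬ v t = u t), if_pos rfl, zero_add]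
        exact h2
      · simp [hx, hx']

lemma Em_ne_zero (t : ι) (h : u t ≠ v t) : Em u v t ≠ 0 := by
  intro hc
  have : Em u v t (u t) = 0 := by rw [hc]; rfl
  rw [Em_apply t _ h] at this
  simp [h.symm] at this

lemma weight_Em (w : σ → ℕ) (t : ι) : Finsupp.weight w (Em u v t) = dd w u v t := by
  simp only [Em, map_add, dd]
  congr 1 <;>
  · rw [Finsupp.weight_apply, Finsupp.sum_single_index] <;> simp

end Basic
section Span

variable (K) {u v : ι → σ}

/-- Membership in the monomial ideal generated by the `mu t`, `t ∈ T`. -/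
lemma mem_span_mu_iff [DecidableEq ι] (huv : Function.Injective (Sum.elim u v)) (T : Finset ι)
    (h : MvPolynomial σ K) :
    h ∈ Ideal.span ((mu K u v) '' T) ↔ ∀ ν ∈ h.support, ∃ t ∈ T, Em u v t ≤ ν := by
  constructor
  · intro hmem
    induction hmem using Submodule.span_induction with
    | mem x hx =>
      obtain ⟨t, ht, rfl⟩ := hx
      intro ν hν
      refine ⟨t, ht, ?_⟩
      classical
      by_cases h1 : (1:K) = 0
      · simp [mu, MvPolynomial.support_monomial, h1] at hν
      · simp [mu, MvPolynomial.support_monomial, h1] at hν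
        simp [hν]
    | zero => simp
    | add x y _ _ hx hy =>
      intro ν hν
      rcases Finset.mem_union.mp (MvPolynomial.support_add hν) with h' | h'
      exacts [hx ν h', hy ν h']
    | smul r x _ hx =>
      intro ν hν
      rw [smul_eq_mul] at hν
      obtain ⟨α, hα, β, hβ, rfl⟩ := Finset.mem_add.mp (MvPolynomial.support_mul r x hν)
      obtain ⟨t, ht, hle⟩ := hx β hβ
      exact ⟨t, ht, le_trans hle (le_add_self)⟩
  · intro hdiv
    rw [← MvPolynomial.support_sum_monomial_coeff h]
    refine Ideal.sum_mem _ fun ν hν => ?_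
    obtain ⟨t, ht, hle⟩ := hdiv ν hν
    have : (monomial ν) (coeff ν h) = (monomial (ν - Em u v t)) (coeff ν h) * mu K u v t := by
      rw [mu, MvPolynomial.monomial_mul, mul_one, tsub_add_cancel_of_le hle]
    rw [this]
    exact Ideal.mul_mem_left _ _ (Ideal.subset_span ⟨t, ht, rfl⟩)

/-- Coprime monomial colon property. -/
lemma colon_mu [DecidableEq ι] [Nontrivial K] (huv : Function.Injective (Sum.elim u v))
    {T : Finset ι} {t₀ : ι} (ht₀ : t₀ ∉ T) {h : MvPolynomial σ K}
    (hmem : mu K u v t₀ * h ∈ Ideal.span ((mu K u v) '' T)) :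
    h ∈ Ideal.span ((mu K u v) '' T) := by
  rw [mem_span_mu_iff K huv] at hmem ⊢
  intro ν hν
  have hsup : Em u v t₀ + ν ∈ (mu K u v t₀ * h).support := by
    rw [MvPolynomial.mem_support_iff, mu, MvPolynomial.coeff_monomial_mul',
      if_pos (self_le_add_right _ _ : Em u v t₀ ≤ Em u v t₀ + ν), add_tsub_cancel_left, one_mul]
    exact MvPolynomial.mem_support_iff.mp hν
  obtain ⟨t, ht, hle⟩ := hmem _ hsup
  refine ⟨t, ht, ?_⟩
  have htne : t ≠ t₀ := by rintro rfl; exact ht₀ ht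
  rw [le_Em_iff huv] at hle ⊢
  have h1 : Em u v t₀ (u t) = 0 := by
    rw [Em_apply t₀ _ (uv_ne huv t₀ t₀)]
    have e1 : u t ≠ u t₀ := fun hc => htne (Sum.inl_injective (α := ι) (huv (by simpa using hc)))
    have e2 : u t ≠ v t₀ := uv_ne huv t t₀
    simp [e1, e2]
  have h2 : Em u v t₀ (v t) = 0 := by
    rw [Em_apply t₀ _ (uv_ne huv t₀ t₀)]
    have e1 : v t ≠ u t₀ := fun hc => (uv_ne huv t₀ t) hc.symm
    have e2 : v t ≠ v t₀ := fun hc => htne (Sum.inr_injective (α := ι) (huv (by simpa using hc)))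
    simp [e1, e2]
  constructor
  · have := hle.1; rwa [Finsupp.add_apply, h1, zero_add] at this
  · have := hle.2; rwa [Finsupp.add_apply, h2, zero_add] at this

/-- A representation of an element of a finitely generated ideal. -/
lemma span_rep [DecidableEq ι] (F : ι → MvPolynomial σ K) (T : Finset ι)
    {h : MvPolynomial σ K} (hmem : h ∈ Ideal.span (F '' T)) :
    ∃ b : ι → MvPolynomial σ K, (∀ t, t ∉ T → b t = 0) ∧ h = ∑ t ∈ T, b t * F t := by
  induction hmem using Submodule.span_induction with
  | mem x hx =>
    obtain ⟨t, ht, rfl⟩ := hx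
    refine ⟨fun s => if s = t then 1 else 0, fun s hs => if_neg (fun hc : s = t => hs (hc ▸ ht)), ?_⟩
    rw [Finset.sum_eq_single t]
    · simp
    · intro s _ hst; simp [hst]
    · intro hc; exact absurd ht hc
  | zero => exact ⟨0, fun _ _ => rfl, by simp⟩
  | add x y _ _ hx hy =>
    obtain ⟨b₁, hb₁, rfl⟩ := hx
    obtain ⟨b₂, hb₂, rfl⟩ := hy
    refine ⟨b₁ + b₂, fun t ht => by simp [hb₁ t ht, hb₂ t ht], ?_⟩
    rw [← Finset.sum_add_distrib]
    exact Finset.sum_congr rfl fun t _ => by simp [add_mul]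
  | smul r x _ hx =>
    obtain ⟨b, hb, rfl⟩ := hx
    exact ⟨fun t => r * b t, fun t ht => by simp [hb t ht],
      by rw [smul_eq_mul, Finset.mul_sum]; exact Finset.sum_congr rfl fun t _ => by ring⟩

end Span
section Degrees

variable (K) {u v : ι → σ} (w : σ → ℕ)

lemma wtd_le_iff {p : MvPolynomial σ K} {D : ℕ} :
    weightedTotalDegree w p ≤ D ↔ ∀ ν ∈ p.support, Finsupp.weight w ν ≤ D :=
  Finset.sup_le_iff

lemma deg_mul_le (p q : MvPolynomial σ K) :
    weightedTotalDegree w (p * q) ≤ weightedTotalDegree w p + weightedTotalDegree w q := by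
  rw [wtd_le_iff]
  intro ν hν
  obtain ⟨α, hα, β, hβ, rfl⟩ := Finset.mem_add.mp (MvPolynomial.support_mul p q hν)
  rw [map_add]
  exact add_le_add (le_weightedTotalDegree w hα) (le_weightedTotalDegree w hβ)

lemma deg_sum_le {α : Type*} (s : Finset α) (F : α → MvPolynomial σ K) {D : ℕ}
    (h : ∀ i ∈ s, weightedTotalDegree w (F i) ≤ D) :
    weightedTotalDegree w (∑ i ∈ s, F i) ≤ D := by
  classical
  rw [wtd_le_iff]
  intro ν hν
  obtain ⟨i, hi, hν'⟩ := Finset.mem_biUnion.mp (MvPolynomial.support_sum hν)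
  exact le_trans (le_weightedTotalDegree w hν') (h i hi)

lemma deg_homog_le {p : MvPolynomial σ K} {n : ℕ} (hp : p.IsWeightedHomogeneous w n) :
    weightedTotalDegree w p ≤ n := by
  rw [wtd_le_iff]
  intro ν hν
  exact le_of_eq (hp (MvPolynomial.mem_support_iff.mp hν))

lemma comp_top_ne_zero {p : MvPolynomial σ K} (hp : p ≠ 0) :
    weightedHomogeneousComponent w (weightedTotalDegree w p) p ≠ 0 := by
  classical
  obtain ⟨ν, hν, hsup⟩ := Finset.exists_mem_eq_sup p.support
    (MvPolynomial.support_nonempty.mpr hp) (fun s => Finsupp.weight w s)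
  intro hc
  have := congrArg (coeff ν) hc
  rw [coeff_weightedHomogeneousComponent, if_pos, coeff_zero] at this
  · exact MvPolynomial.mem_support_iff.mp hν this
  · exact hsup.symm

lemma zero_or_deg_lt {p : MvPolynomial σ K} {X : ℕ}
    (h : ∀ E, X ≤ E → weightedHomogeneousComponent w E p = 0) :
    p = 0 ∨ weightedTotalDegree w p < X := by
  by_cases hp : p = 0
  · exact Or.inl hp
  · right
    by_contra hc
    exact comp_top_ne_zero K w hp (h _ (le_of_not_gt hc))

lemma comp_mu_mul (t : ι) (E : ℕ) (p : MvPolynomial σ K) :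
    weightedHomogeneousComponent w E (mu K u v t * p) =
      if dd w u v t ≤ E then mu K u v t * weightedHomogeneousComponent w (E - dd w u v t) p
      else 0 := by
  classical
  apply MvPolynomial.ext
  intro ν
  rw [coeff_weightedHomogeneousComponent]
  by_cases hle : Em u v t ≤ ν
  · have hw : Finsupp.weight w ν = dd w u v t + Finsupp.weight w (ν - Em u v t) := by
      conv_lhs => rw [← tsub_add_cancel_of_le hle]
      rw [map_add, weight_Em, add_comm]
    have hL : coeff ν (mu K u v t * p) = coeff (ν - Em u v t) p := by
      rw [mu, MvPolynomial.coeff_monomial_mul', if_pos hle, one_mul]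
    by_cases hd : dd w u v t ≤ E
    · rw [if_pos hd]
      have hR : coeff ν (mu K u v t * weightedHomogeneousComponent w (E - dd w u v t) p)
          = if Finsupp.weight w (ν - Em u v t) = E - dd w u v t
            then coeff (ν - Em u v t) p else 0 := by
        rw [mu, MvPolynomial.coeff_monomial_mul', if_pos hle, one_mul,
          coeff_weightedHomogeneousComponent]
      rw [hR, hL]
      by_cases h1 : Finsupp.weight w (ν - Em u v t) = E - dd w u v t
      · rw [if_pos h1, if_pos (show Finsupp.weight w ν = E by omega)]
      · rw [if_neg h1, if_neg (show ¬ Finsupp.weight w ν = E by omega)]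
    · rw [if_neg hd, coeff_zero, hL, if_neg (show ¬ Finsupp.weight w ν = E by omega)]
  · have hL : coeff ν (mu K u v t * p) = 0 := by
      rw [mu, MvPolynomial.coeff_monomial_mul', if_neg hle]
    by_cases hd : dd w u v t ≤ E
    · rw [if_pos hd]
      have hR : coeff ν (mu K u v t * weightedHomogeneousComponent w (E - dd w u v t) p) = 0 := by
        rw [mu, MvPolynomial.coeff_monomial_mul', if_neg hle]
      rw [hR, hL, ite_self]
    · rw [if_neg hd, coeff_zero, hL, ite_self]

lemma deg_qt_pos {q' : MvPolynomial σ K} {t : ι} (hq : weightedTotalDegree w q' < dd w u v t) :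
    1 ≤ dd w u v t := by omega

/-- Component of a product with one of the `f`'s. -/
lemma comp_mul_f {q' a : MvPolynomial σ K} {t : ι} {D : ℕ}
    (hq : weightedTotalDegree w q' < dd w u v t)
    (ha : a = 0 ∨ weightedTotalDegree w a + dd w u v t ≤ D) :
    weightedHomogeneousComponent w D (a * (mu K u v t + q')) =
      weightedHomogeneousComponent w (D - dd w u v t) a * mu K u v t := by
  rcases ha with rfl | ha
  · simp
  have h1 : weightedHomogeneousComponent w D (a * q') = 0 := by
    apply weightedHomogeneousComponent_eq_zero
    calc weightedTotalDegree w (a * q')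
        ≤ weightedTotalDegree w a + weightedTotalDegree w q' := deg_mul_le K w a q'
      _ < D := by omega
  rw [mul_add, map_add, h1, add_zero, mul_comm, comp_mu_mul, if_pos (by omega), mul_comm]

end Degrees
section Syzygy

variable (K) {u v : ι → σ}

lemma syzygy [DecidableEq ι] [Nontrivial K] (huv : Function.Injective (Sum.elim u v))
    (T : Finset ι) (h : ι → MvPolynomial σ K)
    (hrel : ∑ t ∈ T, h t * mu K u v t = 0) :
    ∃ c : ι → ι → MvPolynomial σ K,
      (∀ t s, c t s = - c s t) ∧ (∀ t, c t t = 0) ∧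
      (∀ t s, t ∉ T → c t s = 0) ∧ (∀ t s, s ∉ T → c t s = 0) ∧
      (∀ t ∈ T, h t = ∑ s ∈ T, c t s * mu K u v s) := by
  induction T using Finset.induction_on generalizing h with
  | empty => exact ⟨0, by simp, by simp, by simp, by simp, by simp⟩
  | @insert t₀ T' ht₀ ih =>
    rw [Finset.sum_insert ht₀] at hrel
    have hmem : mu K u v t₀ * h t₀ ∈ Ideal.span ((mu K u v) '' T') := by
      rw [mul_comm]
      have : h t₀ * mu K u v t₀ = - ∑ t ∈ T', h t * mu K u v t :=
        eq_neg_of_add_eq_zero_left hrel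
      rw [this]
      exact neg_mem (Ideal.sum_mem _ fun t ht =>
        Ideal.mul_mem_left _ _ (Ideal.subset_span ⟨t, ht, rfl⟩))
    obtain ⟨b, hb0, hrep⟩ := span_rep K (mu K u v) T' (colon_mu K huv ht₀ hmem)
    set h' : ι → MvPolynomial σ K := fun t => h t + b t * mu K u v t₀ with hh'
    have hrel' : ∑ t ∈ T', h' t * mu K u v t = 0 := by
      have : ∑ t ∈ T', h' t * mu K u v t
          = ∑ t ∈ T', h t * mu K u v t + (∑ t ∈ T', b t * mu K u v t) * mu K u v t₀ := by
        rw [Finset.sum_mul, ← Finset.sum_add_distrib]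
        exact Finset.sum_congr rfl fun t _ => by simp only [hh']; ring
      rw [this, ← hrep]
      linear_combination hrel
    obtain ⟨c', hanti, hdiag, hz1, hz2, hc'⟩ := ih h' hrel'
    refine ⟨fun t s =>
      if t = t₀ then (if s ∈ T' then b s else 0)
      else if s = t₀ then (if t ∈ T' then -(b t) else 0)
      else c' t s, ?_, ?_, ?_, ?_, ?_⟩
    · intro t s
      beta_reduce
      by_cases ht : t = t₀ <;> by_cases hs : s = t₀
      · subst ht; subst hs; simp [if_neg ht₀]
      · subst ht; simp only [if_pos rfl, if_neg hs, if_pos rfl]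
        split_ifs <;> simp
      · subst hs; simp only [if_pos rfl, if_neg ht]
        split_ifs <;> simp
      · simp only [if_neg ht, if_neg hs]
        exact hanti t s
    · intro t
      beta_reduce
      by_cases ht : t = t₀
      · subst ht; simp [if_neg ht₀]
      · simp only [if_neg ht]; exact hdiag t
    · intro t s ht
      have h1 : t ≠ t₀ := fun hc => ht (hc ▸ Finset.mem_insert_self t₀ T')
      have h2 : t ∉ T' := fun hc => ht (Finset.mem_insert_of_mem hc)
      beta_reduce
      simp only [if_neg h1]
      split_ifs with hs
      · simp [h2]
      · exact hz1 t s h2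
    · intro t s hs
      have h1 : s ≠ t₀ := fun hc => hs (hc ▸ Finset.mem_insert_self t₀ T')
      have h2 : s ∉ T' := fun hc => hs (Finset.mem_insert_of_mem hc)
      beta_reduce
      split_ifs with ht
      · simp [h2]
      · exact hz2 t s h2
    · intro t ht
      beta_reduce
      rw [Finset.sum_insert ht₀]
      rcases Finset.mem_insert.mp ht with rfl | htT'
      · have hhead : (if t = t then (if t ∈ T' then b t else 0)
            else if t = t then if t ∈ T' then -b t else 0 else c' t t) = 0 := by
          simp [ht₀]
        have hsum2 : ∀ x ∈ T', (if t = t then (if x ∈ T' then b x else 0)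
            else if x = t then if t ∈ T' then -b t else 0 else c' t x) * mu K u v x
            = b x * mu K u v x := fun x hx => by simp [hx]
        rw [hhead, zero_mul, zero_add, Finset.sum_congr rfl hsum2, hrep]
      · have h1 : t ≠ t₀ := fun hc => ht₀ (hc ▸ htT')
        have hsum : ∑ s ∈ T', (if t = t₀ then (if s ∈ T' then b s else 0)
            else if s = t₀ then (if t ∈ T' then -(b t) else 0) else c' t s) * mu K u v s
            = ∑ s ∈ T', c' t s * mu K u v s := by
          refine Finset.sum_congr rfl fun s hs => ?_
          have h2 : s ≠ t₀ := fun hc => ht₀ (hc ▸ hs)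
          rw [if_neg h1, if_neg h2]
        rw [hsum, ← hc' t htT', if_neg h1, if_pos rfl, if_pos htT']
        simp only [hh']
        ring
end Syzygy
section STD

variable (K) {u v : ι → σ} {w : σ → ℕ}

lemma STD [DecidableEq ι] [Nontrivial K] (huv : Function.Injective (Sum.elim u v))
    (q : ι → MvPolynomial σ K)
    (hq : ∀ t, weightedTotalDegree w (q t) < dd w u v t) (T : Finset ι) (D : ℕ) :
    ∀ (a : ι → MvPolynomial σ K),
      (∀ t, a t = 0 ∨ (t ∈ T ∧ weightedTotalDegree w (a t) + dd w u v t ≤ D)) →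
      ∃ a' : ι → MvPolynomial σ K,
        (∀ t, a' t = 0 ∨ (t ∈ T ∧ weightedTotalDegree w (a' t) + dd w u v t ≤
            weightedTotalDegree w (∑ s ∈ T, a s * (mu K u v s + q s)))) ∧
        ∑ t ∈ T, a' t * (mu K u v t + q t) = ∑ t ∈ T, a t * (mu K u v t + q t) := by
  induction D with
  | zero =>
    intro a ha
    refine ⟨a, fun t => ?_, rfl⟩
    rcases ha t with h0 | ⟨hT, hle⟩
    · exact Or.inl h0
    · exact absurd hle (by have := hq t; omega)
  | succ D ih =>
    intro a ha
    rcases le_or_gt (D+1) (weightedTotalDegree w (∑ s ∈ T, a s * (mu K u v s + q s))) with hD | hD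
    · refine ⟨a, fun t => ?_, rfl⟩
      rcases ha t with h0 | ⟨hT, hle⟩
      · exact Or.inl h0
      · exact Or.inr ⟨hT, le_trans hle hD⟩
    · -- the top components of the `a t` form a syzygy of the monomials
      set c : ι → MvPolynomial σ K :=
        fun t => weightedHomogeneousComponent w (D+1 - dd w u v t) (a t) with hc
      have hckey : ∑ t ∈ T, c t * mu K u v t = 0 := by
        have h1 : ∀ t ∈ T, c t * mu K u v t
            = weightedHomogeneousComponent w (D+1) (a t * (mu K u v t + q t)) := by
          intro t ht
          rw [comp_mul_f K w (hq t)
            (by rcases ha t with h0 | ⟨_, hle⟩; exacts [Or.inl h0, Or.inr hle])]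
        rw [Finset.sum_congr rfl h1, ← map_sum, weightedHomogeneousComponent_eq_zero _ _ hD]
      obtain ⟨e, hanti, hdiag, hz1, hz2, he⟩ := syzygy K huv T c hckey
      set eh : ι → ι → MvPolynomial σ K := fun t s =>
        if dd w u v t + dd w u v s ≤ D + 1 then
          weightedHomogeneousComponent w (D + 1 - dd w u v t - dd w u v s) (e t s) else 0 with heh
      have heh_anti : ∀ t s, eh t s = - eh s t := by
        intro t s
        simp only [heh]
        by_cases hcond : dd w u v t + dd w u v s ≤ D + 1
        · rw [if_pos hcond, if_pos (by omega), hanti t s, map_neg,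
            show D + 1 - dd w u v t - dd w u v s = D + 1 - dd w u v s - dd w u v t by omega]
        · rw [if_neg hcond, if_neg (by omega), neg_zero]
      have heh_diag : ∀ t, eh t t = 0 := by
        intro t
        simp only [heh, hdiag, map_zero, ite_self]
      have heh_z1 : ∀ t s, t ∉ T → eh t s = 0 := by
        intro t s ht
        simp only [heh, hz1 t s ht, map_zero, ite_self]
      have hddpos : ∀ t : ι, 1 ≤ dd w u v t := fun t => by have := hq t; omega
      have hcrep : ∀ t ∈ T, c t = ∑ s ∈ T, eh t s * mu K u v s := by
        intro t ht
        have hhom : (c t).IsWeightedHomogeneous w (D+1 - dd w u v t) :=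
          weightedHomogeneousComponent_isWeightedHomogeneous _ _
        calc c t = weightedHomogeneousComponent w (D+1 - dd w u v t) (c t) :=
              (IsWeightedHomogeneous.weightedHomogeneousComponent_same hhom).symm
          _ = weightedHomogeneousComponent w (D+1 - dd w u v t)
                (∑ s ∈ T, e t s * mu K u v s) := by rw [← he t ht]
          _ = ∑ s ∈ T, eh t s * mu K u v s := by
              rw [map_sum]
              refine Finset.sum_congr rfl fun s hs => ?_
              rw [mul_comm (e t s), comp_mu_mul]
              by_cases hcond : dd w u v t + dd w u v s ≤ D + 1
              · rw [if_pos (by have := hddpos t; have := hddpos s; omega)]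
                simp only [heh, if_pos hcond]
                rw [mul_comm]
              · rw [if_neg (by have := hddpos t; have := hddpos s; omega)]
                simp only [heh, if_neg hcond, zero_mul]
      -- the corrected coefficients
      set a2 : ι → MvPolynomial σ K :=
        fun t => a t - c t - ∑ s ∈ T, eh t s * q s with ha2
      -- double-sum cancellation
      have hdouble : ∑ p ∈ T ×ˢ T, (eh p.1 p.2 * mu K u v p.2 * q p.1
          + eh p.1 p.2 * q p.2 * mu K u v p.1 + eh p.1 p.2 * q p.2 * q p.1) = 0 := by
        refine Finset.sum_involution (fun p _ => (p.2, p.1)) ?_ ?_ ?_ ?_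
        · intro p hp
          rw [heh_anti p.2 p.1]
          ring
        · intro p hp hne hc'
          apply hne
          have h21 : p.2 = p.1 := congrArg Prod.fst hc'
          rw [h21, heh_diag]
          ring
        · intro p hp
          rw [Finset.mem_product] at hp ⊢
          exact ⟨hp.2, hp.1⟩
        · intro p hp
          rfl
      have key : ∑ t ∈ T, (c t + ∑ s ∈ T, eh t s * q s) * (mu K u v t + q t) = 0 := by
        have expand : ∀ t ∈ T, (c t + ∑ s ∈ T, eh t s * q s) * (mu K u v t + q t)
            = c t * mu K u v t + ∑ s ∈ T, (eh t s * mu K u v s * q t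
              + eh t s * q s * mu K u v t + eh t s * q s * q t) := by
          intro t ht
          have h2 : c t * q t = ∑ s ∈ T, eh t s * mu K u v s * q t := by
            rw [hcrep t ht, Finset.sum_mul]
          have h3 : (∑ s ∈ T, eh t s * q s) * mu K u v t
              = ∑ s ∈ T, eh t s * q s * mu K u v t := Finset.sum_mul _ _ _
          have h4 : (∑ s ∈ T, eh t s * q s) * q t
              = ∑ s ∈ T, eh t s * q s * q t := Finset.sum_mul _ _ _
          calc (c t + ∑ s ∈ T, eh t s * q s) * (mu K u v t + q t)
              = c t * mu K u v t + (c t * q t + ((∑ s ∈ T, eh t s * q s) * mu K u v t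
                + (∑ s ∈ T, eh t s * q s) * q t)) := by ring
            _ = c t * mu K u v t + ∑ s ∈ T, (eh t s * mu K u v s * q t
                + eh t s * q s * mu K u v t + eh t s * q s * q t) := by
                rw [h2, h3, h4, ← Finset.sum_add_distrib, ← Finset.sum_add_distrib]
                congr 1
                exact Finset.sum_congr rfl fun s _ => by ring
        rw [Finset.sum_congr rfl expand, Finset.sum_add_distrib, hckey, zero_add,
          ← Finset.sum_product']
        exact hdouble
      have hsum_eq : ∑ t ∈ T, a2 t * (mu K u v t + q t)
          = ∑ t ∈ T, a t * (mu K u v t + q t) := by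
        have : ∀ t ∈ T, a2 t * (mu K u v t + q t)
            = a t * (mu K u v t + q t)
              - (c t + ∑ s ∈ T, eh t s * q s) * (mu K u v t + q t) := by
          intro t _
          simp only [ha2]
          ring
        rw [Finset.sum_congr rfl this, Finset.sum_sub_distrib, key, sub_zero]
      -- degree bound for the corrected coefficients
      have ha2bound : ∀ t, a2 t = 0 ∨ (t ∈ T ∧
          weightedTotalDegree w (a2 t) + dd w u v t ≤ D) := by
        intro t
        by_cases htT : t ∈ T
        · by_cases hddt : dd w u v t ≤ D + 1
          · -- show all high components vanish
            have hcomp : ∀ E, D + 1 - dd w u v t ≤ E →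
                weightedHomogeneousComponent w E (a2 t) = 0 := by
              intro E hE
              have hac : weightedHomogeneousComponent w E (a t - c t) = 0 := by
                rcases eq_or_lt_of_le hE with hEeq | hElt
                · rw [map_sub, ← hEeq]
                  simp only [hc]
                  rw [IsWeightedHomogeneous.weightedHomogeneousComponent_same
                    (weightedHomogeneousComponent_isWeightedHomogeneous _ _), sub_self]
                · rw [map_sub]
                  have h1 : weightedHomogeneousComponent w E (a t) = 0 := by
                    rcases ha t with h0 | ⟨_, hle⟩
                    · rw [h0, map_zero]
                    · exact weightedHomogeneousComponent_eq_zero _ _ (by omega)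
                  have h2 : weightedHomogeneousComponent w E (c t) = 0 := by
                    simp only [hc]
                    exact IsWeightedHomogeneous.weightedHomogeneousComponent_ne _
                      (weightedHomogeneousComponent_isWeightedHomogeneous _ _) (by omega)
                  rw [h1, h2, sub_zero]
              have hehq : ∀ s ∈ T, weightedHomogeneousComponent w E (eh t s * q s) = 0 := by
                intro s hs
                by_cases hcond : dd w u v t + dd w u v s ≤ D + 1
                · apply weightedHomogeneousComponent_eq_zero
                  have hdege : weightedTotalDegree w (eh t s)
                      ≤ D + 1 - dd w u v t - dd w u v s := by
                    simp only [heh, if_pos hcond]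
                    exact deg_homog_le K w
                      (weightedHomogeneousComponent_isWeightedHomogeneous _ _)
                  have hdegq : weightedTotalDegree w (q s) < dd w u v s := hq s
                  have := deg_mul_le K w (eh t s) (q s)
                  have := hddpos s
                  omega
                · simp only [heh, if_neg hcond, zero_mul, map_zero]
              simp only [ha2]
              rw [map_sub, hac, zero_sub, map_sum, Finset.sum_eq_zero hehq, neg_zero]
            rcases zero_or_deg_lt K w hcomp with h0 | hlt
            · exact Or.inl h0
            · exact Or.inr ⟨htT, by omega⟩
          · -- dd t > D + 1 : everything vanishes
            left
            have ha0 : a t = 0 := by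
              rcases ha t with h0 | ⟨_, hle⟩
              · exact h0
              · omega
            have hc0 : c t = 0 := by simp only [hc, ha0, map_zero]
            have heh0 : ∀ s, eh t s = 0 := by
              intro s
              have := hddpos s
              simp only [heh, if_neg (by omega : ¬ dd w u v t + dd w u v s ≤ D + 1)]
            simp only [ha2, ha0, hc0, heh0, zero_mul, Finset.sum_const_zero, sub_zero, sub_self]
        · left
          have ha0 : a t = 0 := by
            rcases ha t with h0 | ⟨hT, _⟩
            · exact h0
            · exact absurd hT htT
          have hc0 : c t = 0 := by simp only [hc, ha0, map_zero]
          have heh0 : ∀ s, eh t s = 0 := fun s => heh_z1 t s htT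
          simp only [ha2, ha0, hc0, heh0, zero_mul, Finset.sum_const_zero, sub_zero, sub_self]
      obtain ⟨a', hb, heq⟩ := ih a2 ha2bound
      refine ⟨a', fun t => ?_, by rw [heq, hsum_eq]⟩
      rcases hb t with h0 | ⟨hT, hle⟩
      · exact Or.inl h0
      · exact Or.inr ⟨hT, by rwa [hsum_eq] at hle⟩

end STD
section Colon

variable (K) {u v : ι → σ} {w : σ → ℕ}

lemma deg_mu_le [Nontrivial K] (t : ι) :
    weightedTotalDegree w (mu K u v t) ≤ dd w u v t := by
  rw [wtd_le_iff]
  intro ν hν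
  classical
  rw [mu, MvPolynomial.support_monomial, if_neg (one_ne_zero : (1:K) ≠ 0)] at hν
  rw [Finset.mem_singleton.mp hν, weight_Em]

lemma main_colon [DecidableEq ι] [Nontrivial K] (huv : Function.Injective (Sum.elim u v))
    (q : ι → MvPolynomial σ K) (hq : ∀ t, weightedTotalDegree w (q t) < dd w u v t)
    {T : Finset ι} {t₀ : ι} (ht₀ : t₀ ∉ T) :
    ∀ (n : ℕ) (h : MvPolynomial σ K), weightedTotalDegree w h ≤ n →
      (mu K u v t₀ + q t₀) * h ∈ Ideal.span ((fun t => mu K u v t + q t) '' T) →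
      h ∈ Ideal.span ((fun t => mu K u v t + q t) '' T) := by
  intro n
  induction n using Nat.strong_induction_on with
  | _ n IH =>
  intro h hdeg hmem
  obtain ⟨a, ha0, harep⟩ := span_rep K _ T hmem
  obtain ⟨a', ha', heq⟩ := STD K huv q hq T
    (T.sup fun t => weightedTotalDegree w (a t) + dd w u v t) a (fun t => by
      by_cases htT : t ∈ T
      · exact Or.inr ⟨htT, Finset.le_sup (f := fun t => weightedTotalDegree w (a t) + dd w u v t) htT⟩
      · exact Or.inl (ha0 t htT))
  have hsum : ∑ t ∈ T, a' t * (mu K u v t + q t) = (mu K u v t₀ + q t₀) * h := by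
    rw [heq, ← harep]
  have hdegF : weightedTotalDegree w (mu K u v t₀ + q t₀) ≤ dd w u v t₀ := by
    rw [wtd_le_iff]
    intro ν hν
    classical
    rcases Finset.mem_union.mp (MvPolynomial.support_add hν) with h' | h'
    · exact le_trans (le_weightedTotalDegree w h') (deg_mu_le K t₀)
    · exact le_trans (le_weightedTotalDegree w h') (le_of_lt (hq t₀))
  have hdegFh : weightedTotalDegree w ((mu K u v t₀ + q t₀) * h)
      ≤ weightedTotalDegree w h + dd w u v t₀ := by
    refine le_trans (deg_mul_le K w _ _) ?_
    have := hdegF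
    omega
  -- top components: the leading form of `h` is in the monomial ideal
  have htop : weightedHomogeneousComponent w (weightedTotalDegree w h + dd w u v t₀)
      ((mu K u v t₀ + q t₀) * h)
      = weightedHomogeneousComponent w (weightedTotalDegree w h) h * mu K u v t₀ := by
    rw [mul_comm, comp_mul_f K w (hq t₀) (Or.inr (le_refl _)), Nat.add_sub_cancel]
  have hin : weightedHomogeneousComponent w (weightedTotalDegree w h) h * mu K u v t₀
      ∈ Ideal.span ((mu K u v) '' T) := by
    rw [← htop, ← hsum, map_sum]
    refine Ideal.sum_mem _ fun t ht => ?_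
    have hbd : a' t = 0 ∨ weightedTotalDegree w (a' t) + dd w u v t
        ≤ weightedTotalDegree w h + dd w u v t₀ := by
      rcases ha' t with h0 | ⟨_, hle⟩
      · exact Or.inl h0
      · refine Or.inr (le_trans hle ?_)
        rw [← heq, hsum]
        exact hdegFh
    rw [comp_mul_f K w (hq t) hbd]
    exact Ideal.mul_mem_left _ _ (Ideal.subset_span ⟨t, ht, rfl⟩)
  have hin2 : weightedHomogeneousComponent w (weightedTotalDegree w h) h
      ∈ Ideal.span ((mu K u v) '' T) :=
    colon_mu K huv ht₀ (by rw [mul_comm] at hin; exact hin)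
  obtain ⟨b, hb0, hbrep⟩ := span_rep K _ T hin2
  classical
  set b' : ι → MvPolynomial σ K := fun t =>
    if dd w u v t ≤ weightedTotalDegree w h then
      weightedHomogeneousComponent w (weightedTotalDegree w h - dd w u v t) (b t) else 0 with hb'
  have hb'rep : weightedHomogeneousComponent w (weightedTotalDegree w h) h
      = ∑ t ∈ T, b' t * mu K u v t := by
    have h1 : weightedHomogeneousComponent w (weightedTotalDegree w h)
        (weightedHomogeneousComponent w (weightedTotalDegree w h) h)
        = weightedHomogeneousComponent w (weightedTotalDegree w h) h :=
      IsWeightedHomogeneous.weightedHomogeneousComponent_same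
        (weightedHomogeneousComponent_isWeightedHomogeneous _ _)
    calc weightedHomogeneousComponent w (weightedTotalDegree w h) h
        = weightedHomogeneousComponent w (weightedTotalDegree w h)
            (∑ t ∈ T, b t * mu K u v t) := by rw [← hbrep, h1]
      _ = ∑ t ∈ T, b' t * mu K u v t := by
          rw [map_sum]
          refine Finset.sum_congr rfl fun t ht => ?_
          rw [mul_comm (b t), comp_mu_mul]
          by_cases hcond : dd w u v t ≤ weightedTotalDegree w h
          · rw [if_pos hcond]
            simp only [hb', if_pos hcond]
            rw [mul_comm]
          · rw [if_neg hcond]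
            simp only [hb', if_neg hcond, zero_mul]
  set h2 : MvPolynomial σ K := h - ∑ t ∈ T, b' t * (mu K u v t + q t) with hh2
  have hb'bound : ∀ t, b' t = 0 ∨ weightedTotalDegree w (b' t) + dd w u v t
      ≤ weightedTotalDegree w h := by
    intro t
    by_cases hcond : dd w u v t ≤ weightedTotalDegree w h
    · right
      have : weightedTotalDegree w (b' t) ≤ weightedTotalDegree w h - dd w u v t := by
        simp only [hb', if_pos hcond]
        exact deg_homog_le K w (weightedHomogeneousComponent_isWeightedHomogeneous _ _)
      omega
    · left
      simp only [hb', if_neg hcond]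
  have hmem2 : (mu K u v t₀ + q t₀) * h2 ∈ Ideal.span ((fun t => mu K u v t + q t) '' T) := by
    have hexp : (mu K u v t₀ + q t₀) * h2 = (mu K u v t₀ + q t₀) * h
        - ∑ t ∈ T, ((mu K u v t₀ + q t₀) * b' t) * (mu K u v t + q t) := by
      simp only [hh2]
      rw [mul_sub, Finset.mul_sum]
      congr 1
      exact Finset.sum_congr rfl fun t _ => by ring
    rw [hexp]
    exact sub_mem hmem (Ideal.sum_mem _ fun t ht =>
      Ideal.mul_mem_left _ _ (Ideal.subset_span ⟨t, ht, rfl⟩))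
  have hcomp2 : ∀ E, weightedTotalDegree w h ≤ E →
      weightedHomogeneousComponent w E h2 = 0 := by
    intro E hE
    have hterm : ∀ t ∈ T, weightedHomogeneousComponent w E (b' t * (mu K u v t + q t))
        = weightedHomogeneousComponent w (E - dd w u v t) (b' t) * mu K u v t := fun t _ =>
      comp_mul_f K w (hq t) (by
        rcases hb'bound t with h0 | hle
        · exact Or.inl h0
        · exact Or.inr (le_trans hle hE))
    simp only [hh2]
    rw [map_sub, map_sum, Finset.sum_congr rfl hterm]
    rcases eq_or_lt_of_le hE with hEeq | hElt
    · rw [← hEeq, hb'rep]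
      rw [sub_eq_zero]
      refine Finset.sum_congr rfl fun t ht => ?_
      by_cases hcond : dd w u v t ≤ weightedTotalDegree w h
      · congr 1
        have : IsWeightedHomogeneous w (b' t) (weightedTotalDegree w h - dd w u v t) := by
          simp only [hb', if_pos hcond]
          exact weightedHomogeneousComponent_isWeightedHomogeneous _ _
        exact (IsWeightedHomogeneous.weightedHomogeneousComponent_same this).symm
      · have hb'0 : b' t = 0 := by simp only [hb', if_neg hcond]
        rw [hb'0, zero_mul, map_zero, zero_mul]
    · have hcomph : weightedHomogeneousComponent w E h = 0 :=
        weightedHomogeneousComponent_eq_zero _ _ hElt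
      have hcompb : ∀ t ∈ T, weightedHomogeneousComponent w (E - dd w u v t) (b' t)
          * mu K u v t = 0 := by
        intro t ht
        by_cases hcond : dd w u v t ≤ weightedTotalDegree w h
        · have hhom : IsWeightedHomogeneous w (b' t)
              (weightedTotalDegree w h - dd w u v t) := by
            simp only [hb', if_pos hcond]
            exact weightedHomogeneousComponent_isWeightedHomogeneous _ _
          rw [IsWeightedHomogeneous.weightedHomogeneousComponent_ne _ hhom (by omega),
            zero_mul]
        · have hb'0 : b' t = 0 := by simp only [hb', if_neg hcond]
          rw [hb'0, map_zero, zero_mul]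
      rw [hcomph, Finset.sum_congr rfl hcompb, Finset.sum_const_zero, sub_zero]
  rcases zero_or_deg_lt K w hcomp2 with h20 | hlt
  · have : h = ∑ t ∈ T, b' t * (mu K u v t + q t) := by
      have := sub_eq_zero.mp (hh2 ▸ h20)
      exact this
    rw [this]
    exact Ideal.sum_mem _ fun t ht =>
      Ideal.mul_mem_left _ _ (Ideal.subset_span ⟨t, ht, rfl⟩)
  · have hmem3 : h2 ∈ Ideal.span ((fun t => mu K u v t + q t) '' T) :=
      IH (weightedTotalDegree w h2) (by omega) h2 le_rfl hmem2
    have : h = h2 + ∑ t ∈ T, b' t * (mu K u v t + q t) := by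
      simp only [hh2]; ring
    rw [this]
    exact add_mem hmem3 (Ideal.sum_mem _ fun t ht =>
      Ideal.mul_mem_left _ _ (Ideal.subset_span ⟨t, ht, rfl⟩))

end Colon
section Main

variable (K) {u v : ι → σ} {w : σ → ℕ}

lemma ideal_smul_top (R : Type*) [CommRing R] (I : Ideal R) :
    I • (⊤ : Submodule R R) = I := by
  conv_lhs => rw [← Ideal.span_eq I]
  rw [Submodule.span_smul_eq, Submodule.set_smul_top_eq_span, Ideal.span_eq]

theorem main_abstract [DecidableEq ι] [Nontrivial K]
    (huv : Function.Injective (Sum.elim u v)) (q : ι → MvPolynomial σ K)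
    (hq : ∀ t, weightedTotalDegree (R := K) w (q t) < dd w u v t)
    (hq0 : ∀ t, constantCoeff (q t) = 0)
    (L : List ι) (hL : L.Nodup) :
    RingTheory.Sequence.IsRegular (MvPolynomial σ K)
      (L.map fun t => mu K u v t + q t) := by
  set f : ι → MvPolynomial σ K := fun t => mu K u v t + q t with hf
  have hspan : ∀ (l : List ι),
      Ideal.ofList (l.map f) = Ideal.span (f '' ↑l.toFinset) := by
    intro l
    unfold Ideal.ofList
    congr 1
    ext x
    simp only [Set.mem_setOf_eq, List.mem_map, Set.mem_image, Finset.coe_sort_coe,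
      List.mem_toFinset, Finset.mem_coe]
  constructor
  · -- weak regularity
    rw [RingTheory.Sequence.isWeaklyRegular_iff]
    intro i hi
    have hiL : i < L.length := by simpa using hi
    have hgetel : (L.map f)[i] = f L[i] := List.getElem_map f
    have htake : (L.map f).take i = (L.take i).map f := List.map_take.symm
    rw [hgetel, htake, hspan, ideal_smul_top]
    set T : Finset ι := (L.take i).toFinset with hT
    have ht₀ : L[i] ∉ T := by
      simp only [hT, List.mem_toFinset]
      intro hmem
      obtain ⟨j, hj, hval⟩ := List.mem_iff_getElem.mp hmem
      have hjlen : j < i := by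
        have := hj
        simp only [List.length_take] at this
        omega
      have : L[j] = L[i] := by
        rw [← hval]
        exact List.getElem_take.symm
      exact absurd (hL.getElem_inj_iff.mp this) (by omega)
    intro x y hxy
    obtain ⟨p, rfl⟩ := Submodule.Quotient.mk_surjective _ x
    obtain ⟨p', rfl⟩ := Submodule.Quotient.mk_surjective _ y
    beta_reduce at hxy
    rw [← Submodule.Quotient.mk_smul, ← Submodule.Quotient.mk_smul,
      Submodule.Quotient.eq] at hxy
    rw [Submodule.Quotient.eq]
    have hmem : f L[i] * (p - p') ∈ Ideal.span (f '' ↑T) := by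
      have : f L[i] • p - f L[i] • p' = f L[i] * (p - p') := by
        simp only [smul_eq_mul]; ring
      rwa [this] at hxy
    exact main_colon K huv q hq ht₀ _ (p - p') le_rfl hmem
  · -- properness
    intro hcontra
    have h1 : (1 : MvPolynomial σ K) ∈ Ideal.ofList (L.map f) • (⊤ : Submodule _ _) :=
      hcontra ▸ Submodule.mem_top
    rw [ideal_smul_top, hspan] at h1
    have hker : Ideal.span (f '' ↑L.toFinset) ≤ RingHom.ker (constantCoeff (σ := σ) (R := K)) := by
      rw [Ideal.span_le]
      rintro x ⟨t, _, rfl⟩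
      have hEm : Em u v t ≠ 0 := Em_ne_zero t (fun hc => uv_ne huv t t hc)
      simp only [SetLike.mem_coe, RingHom.mem_ker, hf, map_add, hq0 t, add_zero, mu,
        constantCoeff_monomial, if_neg hEm]
    have := hker h1
    rw [RingHom.mem_ker, map_one] at this
    exact one_ne_zero this

end Main
section Final

variable (K)

lemma weight_single (w : σ → ℕ) (s : σ) : Finsupp.weight w (Finsupp.single s 1) = w s := by
  rw [Finsupp.weight_apply, Finsupp.sum_single_index] <;> simp

lemma deg_X_le [Nontrivial K] (w : σ → ℕ) (s : σ) :
    weightedTotalDegree (R := K) w (X s) ≤ w s := by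
  rw [wtd_le_iff]
  intro ν hν
  rw [MvPolynomial.support_X, Finset.mem_singleton] at hν
  rw [hν, weight_single]

lemma mu_eq_X_mul_X (u v : ι → σ) (t : ι) :
    mu K u v t = (X (u t) * X (v t) : MvPolynomial σ K) := by
  rw [mu, Em, MvPolynomial.X, MvPolynomial.X, MvPolynomial.monomial_mul, mul_one]

lemma arith_ineq (NN jj ii ll : ℕ) (hll : ll < NN) (hij : ii + jj < NN) (hne : ll ≠ ii + jj) :
    2*NN*NN + 4*jj*ll - 2*ll*ll + (4*ii*ll + 1) + 1
      ≤ 2*NN*NN + 4*jj*(ii+jj) - 2*(ii+jj)*(ii+jj) + (4*ii*(ii+jj) + 1) := by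
  have h1 : 2*ll*ll ≤ 2*NN*NN + 4*jj*ll := by nlinarith
  have h2 : 2*(ii+jj)*(ii+jj) ≤ 2*NN*NN + 4*jj*(ii+jj) := by nlinarith
  zify [h1, h2]
  have hx : ((ll : ℤ) - (ii + jj)) ≠ 0 := by
    intro hc
    apply hne
    omega
  have h3 : 1 ≤ ((ll:ℤ) - (ii+jj))^2 := by
    rcases hx.lt_or_gt with h | h <;> nlinarith
  nlinarith [h3]

theorem final {FK : Type*} [Field FK] (n m d N : ℕ) (hn : 1 ≤ n) (hm : 1 ≤ m)
    (hN : N = n + m + d)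
    (g : Fin m → Fin n → MvPolynomial ((Fin N × Fin n) ⊕ (Fin m × Fin N)) FK)
    (hgsum : ∀ j i, g j i
      = ∑ l : Fin N, X (Sum.inr (j, l)) * X (Sum.inl (l, i))) :
    RingTheory.Sequence.IsRegular (MvPolynomial ((Fin N × Fin n) ⊕ (Fin m × Fin N)) FK)
      ((List.finRange m).flatMap fun j => (List.finRange n).map fun i => g j i) := by
  classical
  have hlt : ∀ t : Fin m × Fin n, (t.2 : ℕ) + (t.1 : ℕ) < N := by
    intro t
    have h1 := t.1.isLt
    have h2 := t.2.isLt
    omega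
  set cc : Fin m × Fin n → Fin N := fun t => ⟨(t.2 : ℕ) + (t.1 : ℕ), hlt t⟩ with hcc
  set u : Fin m × Fin n → (Fin N × Fin n) ⊕ (Fin m × Fin N) :=
    fun t => Sum.inr (t.1, cc t) with hu
  set v : Fin m × Fin n → (Fin N × Fin n) ⊕ (Fin m × Fin N) :=
    fun t => Sum.inl (cc t, t.2) with hv
  set w : (Fin N × Fin n) ⊕ (Fin m × Fin N) → ℕ := Sum.elim
    (fun p => 4 * (p.2 : ℕ) * (p.1 : ℕ) + 1)
    (fun p => 2*N*N + 4*(p.1 : ℕ)*(p.2 : ℕ) - 2*(p.2 : ℕ)*(p.2 : ℕ)) with hw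
  have hccval : ∀ t : Fin m × Fin n, ((cc t : Fin N) : ℕ) = (t.2 : ℕ) + (t.1 : ℕ) := by
    intro t; simp [hcc]
  have huv : Function.Injective (Sum.elim u v) := by
    intro a b hab
    rcases a with s | s <;> rcases b with t | t <;>
      simp only [Sum.elim_inl, Sum.elim_inr] at hab
    · have hp : (s.1, cc s) = (t.1, cc t) := by
        have h := hab
        simp only [hu] at h
        exact Sum.inr.inj h
      have h1 : s.1 = t.1 := congrArg (fun p : Fin m × Fin N => p.1) hp
      have h2 : cc s = cc t := congrArg (fun p : Fin m × Fin N => p.2) hp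
      have h3 : ((s.2 : ℕ) + (s.1 : ℕ)) = ((t.2 : ℕ) + (t.1 : ℕ)) := by
        have := congrArg Fin.val h2
        rwa [hccval, hccval] at this
      have h4 : (s.1 : ℕ) = (t.1 : ℕ) := congrArg Fin.val h1
      exact congrArg Sum.inl (Prod.ext h1 (Fin.ext (by omega)))
    · exfalso; simp [hu, hv] at hab
    · exfalso; simp [hu, hv] at hab
    · have hp : (cc s, s.2) = (cc t, t.2) := by
        have h := hab
        simp only [hv] at h
        exact Sum.inl.inj h
      have h1 : s.2 = t.2 := congrArg (fun p : Fin N × Fin n => p.2) hp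
      have h2 : cc s = cc t := congrArg (fun p : Fin N × Fin n => p.1) hp
      have h3 : ((s.2 : ℕ) + (s.1 : ℕ)) = ((t.2 : ℕ) + (t.1 : ℕ)) := by
        have := congrArg Fin.val h2
        rwa [hccval, hccval] at this
      have h4 : (s.2 : ℕ) = (t.2 : ℕ) := congrArg Fin.val h1
      exact congrArg Sum.inr (Prod.ext (Fin.ext (by omega)) h1)
  set q : Fin m × Fin n → MvPolynomial ((Fin N × Fin n) ⊕ (Fin m × Fin N)) FK :=
    fun t => g t.1 t.2 - mu FK u v t with hqdef
  have hfg : ∀ t, mu FK u v t + q t = g t.1 t.2 := by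
    intro t
    simp only [hqdef]
    ring
  have hq_eq : ∀ t, q t = ∑ l ∈ Finset.univ.erase (cc t),
      (X (Sum.inr (t.1, l)) * X (Sum.inl (l, t.2))
        : MvPolynomial ((Fin N × Fin n) ⊕ (Fin m × Fin N)) FK) := by
    intro t
    have hsplit : ∑ l : Fin N, (X (Sum.inr (t.1, l)) * X (Sum.inl (l, t.2))
          : MvPolynomial ((Fin N × Fin n) ⊕ (Fin m × Fin N)) FK)
        = ∑ l ∈ Finset.univ.erase (cc t), (X (Sum.inr (t.1, l)) * X (Sum.inl (l, t.2)))
          + X (Sum.inr (t.1, cc t)) * X (Sum.inl (cc t, t.2)) :=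
      (Finset.sum_erase_add _ _ (Finset.mem_univ _)).symm
    have hmu : mu FK u v t = X (Sum.inr (t.1, cc t)) * X (Sum.inl (cc t, t.2)) := by
      rw [mu_eq_X_mul_X, hu, hv]
    simp only [hqdef]
    rw [hgsum t.1 t.2, hsplit, hmu]
    ring
  have hwib : ∀ t : Fin m × Fin n, dd w u v t
      = (2*N*N + 4*(t.1 : ℕ)*((t.2 : ℕ) + (t.1 : ℕ))
          - 2*((t.2 : ℕ) + (t.1 : ℕ))*((t.2 : ℕ) + (t.1 : ℕ)))
        + (4*(t.2 : ℕ)*((t.2 : ℕ) + (t.1 : ℕ)) + 1) := by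
    intro t
    simp only [dd, hu, hv, hw, Sum.elim_inr, Sum.elim_inl, hccval]
  have hq : ∀ t, weightedTotalDegree w (q t) < dd w u v t := by
    intro t
    have hbound : weightedTotalDegree w (q t) ≤ dd w u v t - 1 := by
      rw [hq_eq t]
      refine deg_sum_le FK w _ _ fun l hl => ?_
      have hlne : (l : ℕ) ≠ (t.2 : ℕ) + (t.1 : ℕ) := by
        intro hc
        have : l = cc t := Fin.ext (by rw [hccval]; exact hc)
        exact (Finset.mem_erase.mp hl).1 this
      refine le_trans (deg_mul_le FK w _ _) ?_
      refine le_trans (add_le_add (deg_X_le FK w _) (deg_X_le FK w _)) ?_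
      have hwy : w (Sum.inr (t.1, l)) = 2*N*N + 4*(t.1 : ℕ)*(l : ℕ) - 2*(l : ℕ)*(l : ℕ) := by
        simp only [hw, Sum.elim_inr]
      have hwx : w (Sum.inl (l, t.2)) = 4*(t.2 : ℕ)*(l : ℕ) + 1 := by
        simp only [hw, Sum.elim_inl]
      rw [hwy, hwx, hwib t]
      have harith := arith_ineq N (t.1 : ℕ) (t.2 : ℕ) (l : ℕ) l.isLt (hlt t) hlne
      omega
    have hpos : 1 ≤ dd w u v t := by
      rw [hwib t]
      omega
    omega
  have hq0 : ∀ t, constantCoeff (q t) = 0 := by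
    intro t
    rw [hq_eq t, map_sum]
    refine Finset.sum_eq_zero fun l _ => ?_
    simp
  set L : List (Fin m × Fin n) := (List.finRange m).flatMap
    (fun j => (List.finRange n).map (fun i => (j, i))) with hL
  have hnodup : L.Nodup := by
    have : L = (List.finRange m) ×ˢ (List.finRange n) := rfl
    rw [this]
    exact List.Nodup.product (List.nodup_finRange m) (List.nodup_finRange n)
  have hmain := main_abstract FK (w := w) huv q hq hq0 L hnodup
  have hlist : L.map (fun t => mu FK u v t + q t)
      = (List.finRange m).flatMap fun j => (List.finRange n).map fun i => g j i := by
    rw [hL, List.map_flatMap]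
    congr 1
    funext j
    rw [List.map_map]
    congr 1
    funext i
    simpa using hfg (j, i)
  rw [← hlist]
  exact hmain

end Final

end VOCAux

/-- The `nm` quadrics `g j i`, the entries of the product `Y * X` of
the generic `m × N` and `N × n` matrices (`N = n + m + d`), form a regular sequence in
the polynomial ring `A`; in particular the coordinate ring of the variety of length-2
complexes is a complete intersection. -/
theorem variety_of_complexes_quadrics_regular_sequence
    (K : Type*) [Field K] [IsAlgClosed K]
    (n m d : ℕ) (hn : 1 ≤ n) (hm : 1 ≤ m) (N : ℕ) (hN : N = n + m + d)
    (Xgen : Matrix (Fin N) (Fin n) (MvPolynomial ((Fin N × Fin n) ⊕ (Fin m × Fin N)) K))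
    (hX : ∀ l i, Xgen l i = MvPolynomial.X (Sum.inl (l, i)))
    (Ygen : Matrix (Fin m) (Fin N) (MvPolynomial ((Fin N × Fin n) ⊕ (Fin m × Fin N)) K))
    (hY : ∀ j l, Ygen j l = MvPolynomial.X (Sum.inr (j, l)))
    (g : Fin m → Fin n → MvPolynomial ((Fin N × Fin n) ⊕ (Fin m × Fin N)) K)
    (hg : ∀ j i, g j i = ((Ygen * Xgen :
      Matrix (Fin m) (Fin n) (MvPolynomial ((Fin N × Fin n) ⊕ (Fin m × Fin N)) K)) j i))
    (l : List (MvPolynomial ((Fin N × Fin n) ⊕ (Fin m × Fin N)) K))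
    (hl : l = (List.finRange m).flatMap fun j => (List.finRange n).map fun i => g j i) :
    RingTheory.Sequence.IsRegular (MvPolynomial ((Fin N × Fin n) ⊕ (Fin m × Fin N)) K) l := by
  have hgsum : ∀ j i, g j i
      = ∑ ll : Fin N, MvPolynomial.X (Sum.inr (j, ll)) * MvPolynomial.X (Sum.inl (ll, i)) := by
    intro j i
    rw [hg, Matrix.mul_apply]
    exact Finset.sum_congr rfl fun ll _ => by rw [hY, hX]
  rw [hl]
  exact VOCAux.final n m d N hn hm hN g hgsum
end

section
/- Let (X, Y) and (X', Y') be pairs of matrices over k, with X, X' of size N × n and Y, Y' of size m × N, satisfying Y X = 0 and Y' X' = 0. Then (rank X = rank X' and rank Y = rank Y') if and only if there exist invertible matrices P ∈ GL_n(k), G ∈ GL_N(k), R ∈ GL_m(k) such that X' = G X P and Y' = R Y G^{-1}. That is, two closed points of the variety of length-2 complexes lie in the same GL_n(k) × GL_N(k) × GL_m(k) orbit if and only if the ranks of the two matrices agree. (Proposition 5.1(d), orbit classification.) -/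
set_option autoImplicit false

open LinearMap Submodule Module

section Helpers

variable {K : Type*} [Field K]

/-- A complement of the kernel is equivalent to the range, via `f`. -/
noncomputable def equivRangeOfIsCompl {V W : Type*} [AddCommGroup V] [Module K V]
    [AddCommGroup W] [Module K W] (f : V →ₗ[K] W) {C : Submodule K V}
    (hC : IsCompl (ker f) C) : C ≃ₗ[K] range f :=
  (Submodule.quotientEquivOfIsCompl _ _ hC).symm ≪≫ₗ f.quotKerEquivRange

lemma equivRangeOfIsCompl_apply {V W : Type*} [AddCommGroup V] [Module K V]
    [AddCommGroup W] [Module K W] (f : V →ₗ[K] W) {C : Submodule K V}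
    (hC : IsCompl (ker f) C) (c : C) :
    (equivRangeOfIsCompl f hC c : W) = f c := rfl

/-- Extend an equivalence of submodules to an equivalence of ambient spaces of equal dims. -/
lemma extend_equiv {W W' : Type*} [AddCommGroup W] [Module K W] [AddCommGroup W'] [Module K W']
    [FiniteDimensional K W] [FiniteDimensional K W']
    (p : Submodule K W) (p' : Submodule K W') (δ : p ≃ₗ[K] p')
    (hW : finrank K W = finrank K W') :
    ∃ β : W ≃ₗ[K] W', ∀ x : p, β x = (δ x : W') := by
  obtain ⟨q, hq⟩ := p.exists_isCompl
  obtain ⟨q', hq'⟩ := p'.exists_isCompl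
  have h1 := Submodule.finrank_sup_add_finrank_inf_eq p q
  have h2 := Submodule.finrank_sup_add_finrank_inf_eq p' q'
  rw [hq.sup_eq_top, hq.inf_eq_bot, finrank_top, finrank_bot] at h1
  rw [hq'.sup_eq_top, hq'.inf_eq_bot, finrank_top, finrank_bot] at h2
  have hpp : finrank K p = finrank K p' := δ.finrank_eq
  have hfr : finrank K q = finrank K q' := by omega
  refine ⟨(prodEquivOfIsCompl p q hq).symm ≪≫ₗ (δ.prodCongr (LinearEquiv.ofFinrankEq _ _ hfr)) ≪≫ₗ
    prodEquivOfIsCompl p' q' hq', fun x => ?_⟩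
  simp

/-- Two linear maps of equal rank between spaces of equal dimensions are equivalent,
with a specified equivalence of ranges. -/
lemma exists_equiv_maps {V V' W W' : Type*} [AddCommGroup V] [Module K V]
    [AddCommGroup V'] [Module K V'] [AddCommGroup W] [Module K W]
    [AddCommGroup W'] [Module K W'] [FiniteDimensional K V] [FiniteDimensional K V']
    [FiniteDimensional K W] [FiniteDimensional K W']
    (f : V →ₗ[K] W) (f' : V' →ₗ[K] W')
    (hV : finrank K V = finrank K V')
    (hr : finrank K (range f) = finrank K (range f')) :
    ∃ (α : V ≃ₗ[K] V') (δ : range f ≃ₗ[K] range f'),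
      ∀ v : V, (δ ⟨f v, mem_range_self f v⟩ : W') = f' (α v) := by
  obtain ⟨C, hC⟩ := (ker f).exists_isCompl
  obtain ⟨C', hC'⟩ := (ker f').exists_isCompl
  set e := equivRangeOfIsCompl f hC
  set e' := equivRangeOfIsCompl f' hC'
  set δ : range f ≃ₗ[K] range f' := LinearEquiv.ofFinrankEq _ _ hr
  set θ : C ≃ₗ[K] C' := e ≪≫ₗ δ ≪≫ₗ e'.symm
  have hker : finrank K (ker f) = finrank K (ker f') := by
    have := f.finrank_range_add_finrank_ker
    have := f'.finrank_range_add_finrank_ker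
    omega
  set φ : (ker f) ≃ₗ[K] (ker f') := LinearEquiv.ofFinrankEq _ _ hker
  set α : V ≃ₗ[K] V' := (prodEquivOfIsCompl _ _ hC).symm ≪≫ₗ (φ.prodCongr θ) ≪≫ₗ
    prodEquivOfIsCompl _ _ hC'
  refine ⟨α, δ, fun v => ?_⟩
  set u := (prodEquivOfIsCompl _ _ hC).symm v with hu
  have hv : (u.1 : V) + u.2 = v := by
    rw [hu]; exact (prodEquivOfIsCompl _ _ hC).apply_symm_apply v
  have hαv : α v = (φ u.1 : V') + (θ u.2 : V') := by
    show (prodEquivOfIsCompl _ _ hC') ((φ.prodCongr θ) u) = _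
    rfl
  have hfv : f v = f u.2 := by
    rw [← hv, map_add, (mem_ker.mp u.1.2), zero_add]
  have h1 : f' (α v) = f' (θ u.2 : V') := by
    rw [hαv, map_add, mem_ker.mp (φ u.1).2, zero_add]
  have h2 : f' ((θ u.2 : V')) = (e' (θ u.2) : W') := (equivRangeOfIsCompl_apply f' hC' _).symm
  have h3 : e' (θ u.2) = δ (e u.2) := by
    show e' ((e ≪≫ₗ δ ≪≫ₗ e'.symm) u.2) = _
    simp
  have h4 : e u.2 = ⟨f v, mem_range_self f v⟩ := by
    apply Subtype.ext
    rw [equivRangeOfIsCompl_apply, ← hfv]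
  rw [h1, h2, h3, h4]

lemma exists_equiv_complex {V W U : Type*} [AddCommGroup V] [Module K V]
    [AddCommGroup W] [Module K W] [AddCommGroup U] [Module K U]
    [FiniteDimensional K V] [FiniteDimensional K W] [FiniteDimensional K U]
    (f f' : V →ₗ[K] W) (g g' : W →ₗ[K] U)
    (hfg : range f ≤ ker g) (hfg' : range f' ≤ ker g')
    (hrf : finrank K (range f) = finrank K (range f'))
    (hrg : finrank K (range g) = finrank K (range g')) :
    ∃ (α : V ≃ₗ[K] V) (β : W ≃ₗ[K] W) (γ : U ≃ₗ[K] U),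
      (∀ v, β (f v) = f' (α v)) ∧ (∀ w, γ (g w) = g' (β w)) := by
  set f₀ : V →ₗ[K] (ker g) := f.codRestrict (ker g) (fun v => hfg (mem_range_self f v)) with hf₀
  set f₀' : V →ₗ[K] (ker g') := f'.codRestrict (ker g') (fun v => hfg' (mem_range_self f' v))
  have hr₀ : finrank K (range f₀) = finrank K (range f₀') := by
    rw [range_codRestrict, range_codRestrict]
    rw [(Submodule.comapSubtypeEquivOfLe hfg).finrank_eq,
      (Submodule.comapSubtypeEquivOfLe hfg').finrank_eq]
    exact hrf
  have hker : finrank K (ker g) = finrank K (ker g') := by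
    have := g.finrank_range_add_finrank_ker
    have := g'.finrank_range_add_finrank_ker
    omega
  obtain ⟨α, δ₀, hδ₀⟩ := exists_equiv_maps f₀ f₀' rfl hr₀
  obtain ⟨β₁, hβ₁⟩ := extend_equiv (range f₀) (range f₀') δ₀ hker
  have hcomm₁ : ∀ v, β₁ (f₀ v) = f₀' (α v) := by
    intro v
    have h := hβ₁ ⟨f₀ v, mem_range_self f₀ v⟩
    rw [hδ₀ v] at h
    exact h
  obtain ⟨W₂, h₂⟩ := (ker g).exists_isCompl
  obtain ⟨W₂', h₂'⟩ := (ker g').exists_isCompl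
  set eW := equivRangeOfIsCompl g h₂
  set eW' := equivRangeOfIsCompl g' h₂'
  set δ : range g ≃ₗ[K] range g' := LinearEquiv.ofFinrankEq _ _ hrg
  set β₂ : W₂ ≃ₗ[K] W₂' := eW ≪≫ₗ δ ≪≫ₗ eW'.symm
  set β : W ≃ₗ[K] W := (prodEquivOfIsCompl _ _ h₂).symm ≪≫ₗ (β₁.prodCongr β₂) ≪≫ₗ
    prodEquivOfIsCompl _ _ h₂'
  obtain ⟨γ, hγ⟩ := extend_equiv (range g) (range g') δ rfl
  have hβleft : ∀ k : ker g, β (k : W) = (β₁ k : W) := by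
    intro k
    show (prodEquivOfIsCompl _ _ h₂') ((β₁.prodCongr β₂) ((prodEquivOfIsCompl _ _ h₂).symm k)) = _
    rw [prodEquivOfIsCompl_symm_apply_left]
    simp
  refine ⟨α, β, γ, fun v => ?_, fun w => ?_⟩
  · have h1 : f v = ((f₀ v : ker g) : W) := rfl
    rw [h1, hβleft, hcomm₁]
    rfl
  · set u := (prodEquivOfIsCompl _ _ h₂).symm w with hu
    have hw : (u.1 : W) + u.2 = w := (prodEquivOfIsCompl _ _ h₂).apply_symm_apply w
    have hgw : g w = (eW u.2 : U) := by
      rw [← hw, map_add, mem_ker.mp u.1.2, zero_add, equivRangeOfIsCompl_apply]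
    have hβw : β w = (β₁ u.1 : W) + (β₂ u.2 : W) := by
      show (prodEquivOfIsCompl _ _ h₂') ((β₁.prodCongr β₂) u) = _
      rfl
    rw [hgw]
    have h5 := hγ (eW u.2)
    rw [h5, hβw, map_add, mem_ker.mp (β₁ u.1).2, zero_add]
    have h6 : g' ((β₂ u.2 : W)) = (eW' (β₂ u.2) : U) := (equivRangeOfIsCompl_apply g' h₂' _).symm
    rw [h6]
    congr 1
    have h7 : eW' (β₂ u.2) = δ (eW u.2) := by
      show eW' ((eW ≪≫ₗ δ ≪≫ₗ eW'.symm) u.2) = _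
      simp
    exact h7.symm

end Helpers

/-- Two pairs of matrices `(X, Y)` and `(X', Y')`, with `X, X'` of
size `N × n` and `Y, Y'` of size `m × N`, satisfying `Y X = 0` and `Y' X' = 0`, have
the same pair of ranks if and only if they lie in the same
`GL_n(K) × GL_N(K) × GL_m(K)` orbit: `X' = G X P`, `Y' = R Y G⁻¹` for invertible
`P`, `G`, `R`. -/
theorem variety_of_complexes_orbit_classification
    (K : Type*) [Field K] [IsAlgClosed K]
    (n m N : ℕ) (hn : 1 ≤ n) (hm : 1 ≤ m) (hN : 1 ≤ N)
    (X X' : Matrix (Fin N) (Fin n) K) (Y Y' : Matrix (Fin m) (Fin N) K)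
    (hYX : Y * X = 0) (hYX' : Y' * X' = 0) :
    (X.rank = X'.rank ∧ Y.rank = Y'.rank) ↔
      ∃ (P : Matrix (Fin n) (Fin n) K) (G : Matrix (Fin N) (Fin N) K)
        (R : Matrix (Fin m) (Fin m) K),
        IsUnit P ∧ IsUnit G ∧ IsUnit R ∧ X' = G * X * P ∧ Y' = R * Y * G⁻¹ := by
  constructor
  · rintro ⟨hX, hY⟩
    have hfg : range X.mulVecLin ≤ ker Y.mulVecLin := by
      rw [range_le_ker_iff, ← Matrix.mulVecLin_mul, hYX, Matrix.mulVecLin_zero]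
    have hfg' : range X'.mulVecLin ≤ ker Y'.mulVecLin := by
      rw [range_le_ker_iff, ← Matrix.mulVecLin_mul, hYX', Matrix.mulVecLin_zero]
    obtain ⟨α, β, γ, hαβ, hβγ⟩ := exists_equiv_complex X.mulVecLin X'.mulVecLin
      Y.mulVecLin Y'.mulVecLin hfg hfg' hX hY
    set G := LinearMap.toMatrix' (β : (Fin N → K) →ₗ[K] (Fin N → K)) with hGdef
    set Gi := LinearMap.toMatrix' (β.symm : (Fin N → K) →ₗ[K] (Fin N → K))
    set P := LinearMap.toMatrix' (α.symm : (Fin n → K) →ₗ[K] (Fin n → K))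
    set Pi := LinearMap.toMatrix' (α : (Fin n → K) →ₗ[K] (Fin n → K))
    set R := LinearMap.toMatrix' (γ : (Fin m → K) →ₗ[K] (Fin m → K))
    set Ri := LinearMap.toMatrix' (γ.symm : (Fin m → K) →ₗ[K] (Fin m → K))
    have comp_eq_one : ∀ {k : ℕ} (e : (Fin k → K) ≃ₗ[K] (Fin k → K)),
        LinearMap.toMatrix' (e : (Fin k → K) →ₗ[K] (Fin k → K)) *
          LinearMap.toMatrix' (e.symm : (Fin k → K) →ₗ[K] (Fin k → K)) = 1 := by
      intro k e
      rw [← LinearMap.toMatrix'_comp, LinearEquiv.comp_coe, LinearEquiv.symm_trans_self,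
        LinearEquiv.refl_toLinearMap, LinearMap.toMatrix'_id]
    have inv_comp_eq_one : ∀ {k : ℕ} (e : (Fin k → K) ≃ₗ[K] (Fin k → K)),
        LinearMap.toMatrix' (e.symm : (Fin k → K) →ₗ[K] (Fin k → K)) *
          LinearMap.toMatrix' (e : (Fin k → K) →ₗ[K] (Fin k → K)) = 1 := by
      intro k e
      rw [← LinearMap.toMatrix'_comp, LinearEquiv.comp_coe, LinearEquiv.self_trans_symm,
        LinearEquiv.refl_toLinearMap, LinearMap.toMatrix'_id]
    have hGu : IsUnit G := ⟨⟨G, Gi, comp_eq_one β, inv_comp_eq_one β⟩, rfl⟩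
    have hPu : IsUnit P := ⟨⟨P, Pi, inv_comp_eq_one α, comp_eq_one α⟩, rfl⟩
    have hRu : IsUnit R := ⟨⟨R, Ri, comp_eq_one γ, inv_comp_eq_one γ⟩, rfl⟩
    have hGinv : G⁻¹ = Gi := Matrix.inv_eq_right_inv (comp_eq_one β)
    refine ⟨P, G, R, hPu, hGu, hRu, ?_, ?_⟩
    · have hmaps : X'.mulVecLin = (β : (Fin N → K) →ₗ[K] (Fin N → K)) ∘ₗ X.mulVecLin ∘ₗ
          (α.symm : (Fin n → K) →ₗ[K] (Fin n → K)) := by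
        refine LinearMap.ext fun v => ?_
        simp only [LinearMap.comp_apply, LinearEquiv.coe_coe]
        rw [hαβ (α.symm v), LinearEquiv.apply_symm_apply]
      have : X' = LinearMap.toMatrix' (X'.mulVecLin) := by
        rw [← Matrix.toLin'_apply', LinearMap.toMatrix'_toLin']
      rw [this, hmaps, LinearMap.toMatrix'_comp, LinearMap.toMatrix'_comp]
      rw [← Matrix.toLin'_apply', LinearMap.toMatrix'_toLin']
      exact (Matrix.mul_assoc G X P).symm
    · have hmaps : Y'.mulVecLin = (γ : (Fin m → K) →ₗ[K] (Fin m → K)) ∘ₗ Y.mulVecLin ∘ₗ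
          (β.symm : (Fin N → K) →ₗ[K] (Fin N → K)) := by
        refine LinearMap.ext fun v => ?_
        simp only [LinearMap.comp_apply, LinearEquiv.coe_coe]
        rw [hβγ (β.symm v), LinearEquiv.apply_symm_apply]
      have : Y' = LinearMap.toMatrix' (Y'.mulVecLin) := by
        rw [← Matrix.toLin'_apply', LinearMap.toMatrix'_toLin']
      rw [this, hmaps, LinearMap.toMatrix'_comp, LinearMap.toMatrix'_comp, hGinv]
      rw [← Matrix.toLin'_apply', LinearMap.toMatrix'_toLin']
      exact (Matrix.mul_assoc R Y Gi).symm
  · rintro ⟨P, G, R, hP, hG, hR, hX', hY'⟩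
    have hPd := (Matrix.isUnit_iff_isUnit_det P).mp hP
    have hGd := (Matrix.isUnit_iff_isUnit_det G).mp hG
    have hRd := (Matrix.isUnit_iff_isUnit_det R).mp hR
    constructor
    · rw [hX', Matrix.rank_mul_eq_left_of_isUnit_det P (G * X) hPd,
        Matrix.rank_mul_eq_right_of_isUnit_det G X hGd]
    · rw [hY', Matrix.rank_mul_eq_left_of_isUnit_det G⁻¹ (R * Y)
        (Matrix.isUnit_nonsing_inv_det G hGd),
        Matrix.rank_mul_eq_right_of_isUnit_det R Y hRd]
end
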